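/- arXiv:1307.5110 — 5 statements merged into one kernel-verified Lean document; each statement's English description precedes it below -/
import Mathlib

section
/- Let G be a weighted graph containing a pendant vertex v whose unique neighbor is u. Then i₊(G) = i₊(G − u − v) + 1 and i₋(G) = i₋(G − u − v) + 1, where G − u − v denotes the weighted graph obtained from G by deleting the vertices u and v and all incident edges. -/
/-- Number of positive eigenvalues (with multiplicity) of a real matrix
(0 if the matrix is not symmetric/Hermitian). -/
noncomputable def iPos {m : Type*} [Fintype m] [DecidableEq m] (A : Matrix m m ℝ) : ℕ :=
  if h : A.IsHermitian then Nat.card {i // 0 < h.eigenvalues i} else 0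

/-- Number of negative eigenvalues (with multiplicity). -/
noncomputable def iNeg {m : Type*} [Fintype m] [DecidableEq m] (A : Matrix m m ℝ) : ℕ :=
  if h : A.IsHermitian then Nat.card {i // h.eigenvalues i < 0} else 0

/-- Multiplicity of the eigenvalue zero. -/
noncomputable def iZero {m : Type*} [Fintype m] [DecidableEq m] (A : Matrix m m ℝ) : ℕ :=
  if h : A.IsHermitian then Nat.card {i // h.eigenvalues i = 0} else 0

/-- `w` is a (positive) edge-weighting of the simple graph `G`; the matrix
`Matrix.of w` is then the weighted adjacency matrix of the weighted graph `(G, w)`. -/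
def IsWeighting {V : Type*} (G : SimpleGraph V) (w : V → V → ℝ) : Prop :=
  (∀ u v, w u v = w v u) ∧ (∀ u v, G.Adj u v → 0 < w u v) ∧ (∀ u v, ¬G.Adj u v → w u v = 0)

open Matrix Module Submodule Finset

noncomputable def qf {n : Type*} [Fintype n] (A : Matrix n n ℝ) (x : n → ℝ) : ℝ :=
  x ⬝ᵥ (A *ᵥ x)

section eig
variable {n : Type*} [Fintype n] [DecidableEq n] {A : Matrix n n ℝ} (hA : A.IsHermitian)

noncomputable def bv (i : n) : n → ℝ := ⇑(hA.eigenvectorBasis i)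

lemma bv_orth (i j : n) : bv hA i ⬝ᵥ bv hA j = if i = j then 1 else 0 := by
  have := hA.eigenvectorBasis.orthonormal
  rw [orthonormal_iff_ite] at this
  have h := this i j
  simpa [bv, PiLp.inner_apply, RCLike.inner_apply, dotProduct, mul_comm] using h

lemma bv_eig (i : n) : A *ᵥ bv hA i = hA.eigenvalues i • bv hA i :=
  hA.mulVec_eigenvectorBasis i
end eig

section eig2
variable {n : Type*} [Fintype n] [DecidableEq n] {A : Matrix n n ℝ} (hA : A.IsHermitian)

lemma dotProduct_sum' {ι : Type*} (s : Finset ι) (x : n → ℝ) (f : ι → n → ℝ) :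
    x ⬝ᵥ (∑ i ∈ s, f i) = ∑ i ∈ s, x ⬝ᵥ f i := by
  simp only [dotProduct, Finset.sum_apply, Finset.mul_sum]
  exact Finset.sum_comm

lemma mulVec_sum' {ι : Type*} (s : Finset ι) (f : ι → n → ℝ) :
    A *ᵥ (∑ i ∈ s, f i) = ∑ i ∈ s, A *ᵥ f i :=
  map_sum (Matrix.mulVecLin A) f s

lemma bv_indep {ι : Type*} [Fintype ι] (e : ι → n) (he : Function.Injective e)
    (c : ι → ℝ) (h : ∑ i, c i • bv hA (e i) = 0) : ∀ i, c i = 0 := by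
  intro i0
  have h2 : bv hA (e i0) ⬝ᵥ (∑ i, c i • bv hA (e i)) = 0 := by rw [h]; simp
  rw [dotProduct_sum'] at h2
  simp only [dotProduct_smul, bv_orth, smul_eq_mul] at h2
  rwa [Finset.sum_eq_single i0 (fun j _ hj => by
      simp [if_neg (fun hh : e i0 = e j => hj (he hh).symm)])
    (by simp), if_pos rfl, mul_one] at h2

lemma qf_bv_sum {ι : Type*} [Fintype ι] (e : ι → n) (he : Function.Injective e)
    (c : ι → ℝ) : qf A (∑ i, c i • bv hA (e i)) = ∑ i, hA.eigenvalues (e i) * c i ^ 2 := by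
  rw [qf]
  have : A *ᵥ (∑ i, c i • bv hA (e i))
      = ∑ i, (c i * hA.eigenvalues (e i)) • bv hA (e i) := by
    rw [mulVec_sum']
    congr 1; funext i; rw [mulVec_smul, bv_eig, smul_smul]
  rw [this, dotProduct_sum']
  refine Finset.sum_congr rfl (fun i _ => ?_)
  rw [dotProduct_smul, dotProduct_comm, dotProduct_sum']
  simp only [dotProduct_smul, bv_orth, smul_eq_mul]
  rw [Finset.sum_eq_single i (fun j _ hj => by
      simp [if_neg (fun hh : e i = e j => hj (he hh).symm)])
    (by simp), if_pos rfl]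
  ring

/-- master subspace lemma -/
lemma exists_subspace (t : ℝ → Prop) [DecidablePred t] :
    ∃ W : Submodule ℝ (n → ℝ), finrank ℝ W = Nat.card {i // t (hA.eigenvalues i)} ∧
      ∀ x ∈ W, ∃ c : {i // t (hA.eigenvalues i)} → ℝ,
        x = ∑ i : {i // t (hA.eigenvalues i)}, c i • bv hA i.1 ∧
        qf A x = ∑ i : {i // t (hA.eigenvalues i)}, hA.eigenvalues i.1 * c i ^ 2 ∧
        (x ≠ 0 → ∃ i, c i ≠ 0) := by
  classical
  refine ⟨span ℝ (Set.range fun i : {i // t (hA.eigenvalues i)} => bv hA (i : n)), ?_, ?_⟩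
  · rw [finrank_span_eq_card, Nat.card_eq_fintype_card]
    rw [Fintype.linearIndependent_iff]
    intro c h
    exact bv_indep hA _ Subtype.val_injective c h
  · intro x hx
    obtain ⟨c, hc⟩ := mem_span_range_iff_exists_fun ℝ |>.mp hx
    refine ⟨c, hc.symm, by rw [← hc, qf_bv_sum hA _ Subtype.val_injective], ?_⟩
    intro hx0
    by_contra h
    push_neg at h
    exact hx0 (by rw [← hc]; simp [h])
end eig2

section eig3
variable {n : Type*} [Fintype n] [DecidableEq n] {A : Matrix n n ℝ} (hA : A.IsHermitian)

lemma exists_pos_subspace :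
    ∃ P : Submodule ℝ (n → ℝ), finrank ℝ P = Nat.card {i // 0 < hA.eigenvalues i} ∧
      ∀ x ∈ P, x ≠ 0 → 0 < qf A x := by
  obtain ⟨W, hr, hW⟩ := exists_subspace hA (fun r => 0 < r)
  refine ⟨W, hr, fun x hx hx0 => ?_⟩
  obtain ⟨c, -, hq, hnz⟩ := hW x hx
  obtain ⟨i0, hi0⟩ := hnz hx0
  rw [hq]
  refine Finset.sum_pos' (fun i _ => mul_nonneg i.2.le (sq_nonneg _))
    ⟨i0, Finset.mem_univ _, mul_pos i0.2
      (lt_of_le_of_ne (sq_nonneg _) (Ne.symm (pow_ne_zero 2 hi0)))⟩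

lemma exists_nonpos_subspace :
    ∃ N : Submodule ℝ (n → ℝ), finrank ℝ N = Nat.card {i // ¬ 0 < hA.eigenvalues i} ∧
      ∀ x ∈ N, qf A x ≤ 0 := by
  obtain ⟨W, hr, hW⟩ := exists_subspace hA (fun r => ¬ 0 < r)
  refine ⟨W, hr, fun x hx => ?_⟩
  obtain ⟨c, -, hq, -⟩ := hW x hx
  rw [hq]
  refine Finset.sum_nonpos (fun i _ => ?_)
  have h2 := i.2
  push_neg at h2
  exact mul_nonpos_of_nonpos_of_nonneg h2 (sq_nonneg _)

lemma exists_neg_subspace :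
    ∃ P : Submodule ℝ (n → ℝ), finrank ℝ P = Nat.card {i // hA.eigenvalues i < 0} ∧
      ∀ x ∈ P, x ≠ 0 → qf A x < 0 := by
  obtain ⟨W, hr, hW⟩ := exists_subspace hA (fun r => r < 0)
  refine ⟨W, hr, fun x hx hx0 => ?_⟩
  obtain ⟨c, -, hq, hnz⟩ := hW x hx
  obtain ⟨i0, hi0⟩ := hnz hx0
  rw [hq]
  refine Finset.sum_neg' (fun i _ => ?_) ⟨i0, Finset.mem_univ _, ?_⟩
  · exact mul_nonpos_of_nonpos_of_nonneg i.2.le (sq_nonneg _)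
  · exact mul_neg_of_neg_of_pos i0.2
      (lt_of_le_of_ne (sq_nonneg _) (Ne.symm (pow_ne_zero 2 hi0)))

lemma exists_nonneg_subspace :
    ∃ N : Submodule ℝ (n → ℝ), finrank ℝ N = Nat.card {i // ¬ hA.eigenvalues i < 0} ∧
      ∀ x ∈ N, 0 ≤ qf A x := by
  obtain ⟨W, hr, hW⟩ := exists_subspace hA (fun r => ¬ r < 0)
  refine ⟨W, hr, fun x hx => ?_⟩
  obtain ⟨c, -, hq, -⟩ := hW x hx
  rw [hq]
  refine Finset.sum_nonneg (fun i _ => ?_)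
  have h2 := i.2
  push_neg at h2
  positivity

lemma card_not (t : ℝ → Prop) [DecidablePred t] :
    Nat.card {i // t (hA.eigenvalues i)} + Nat.card {i // ¬ t (hA.eigenvalues i)}
      = Fintype.card n := by
  simp only [Nat.card_eq_fintype_card, Fintype.card_subtype]
  exact Finset.card_filter_add_card_filter_not _

end eig3

lemma key_le {X : Type*} [AddCommGroup X] [Module ℝ X] [FiniteDimensional ℝ X]
    (q : X → ℝ) (W N : Submodule ℝ X) (hW : ∀ x ∈ W, x ≠ 0 → 0 < q x)
    (hN : ∀ x ∈ N, q x ≤ 0) :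
    finrank ℝ W + finrank ℝ N ≤ finrank ℝ X := by
  have hinf : W ⊓ N = ⊥ := by
    rw [eq_bot_iff]
    intro x hx
    rcases eq_or_ne x 0 with h | h
    · simp [h]
    · exact absurd (hN x hx.2) (not_le.mpr (hW x hx.1 h))
  calc finrank ℝ W + finrank ℝ N
      = finrank ℝ ↥(W ⊔ N) + finrank ℝ ↥(W ⊓ N) :=
        (Submodule.finrank_sup_add_finrank_inf_eq W N).symm
    _ ≤ finrank ℝ X := by rw [hinf]; simpa using Submodule.finrank_le (W ⊔ N)

section lift
variable {V : Type*} [Fintype V] [DecidableEq V] (u v : V)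

noncomputable def Lmap : ({x : V // x ≠ u ∧ x ≠ v} → ℝ) →ₗ[ℝ] (V → ℝ) where
  toFun z t := if h : t ≠ u ∧ t ≠ v then z ⟨t, h⟩ else 0
  map_add' x y := by funext t; by_cases h : t ≠ u ∧ t ≠ v <;> simp [h]
  map_smul' c x := by funext t; by_cases h : t ≠ u ∧ t ≠ v <;> simp [h]

lemma Lmap_coe (z : {x : V // x ≠ u ∧ x ≠ v} → ℝ) (s : {x : V // x ≠ u ∧ x ≠ v}) :
    Lmap u v z s.1 = z s := by
  simp only [Lmap, LinearMap.coe_mk, AddHom.coe_mk, dif_pos s.2]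

lemma Lmap_u (z : {x : V // x ≠ u ∧ x ≠ v} → ℝ) : Lmap u v z u = 0 := by
  simp [Lmap]

lemma Lmap_v (z : {x : V // x ≠ u ∧ x ≠ v} → ℝ) : Lmap u v z v = 0 := by
  simp [Lmap]

lemma Lmap_inj : Function.Injective (Lmap u v) := by
  intro z z' h
  funext s
  rw [← Lmap_coe u v z s, ← Lmap_coe u v z' s, h]

lemma sup_mem (W : Submodule ℝ ({x : V // x ≠ u ∧ x ≠ v} → ℝ)) (δ : V → ℝ) (x : V → ℝ)
    (hx : x ∈ span ℝ {δ} ⊔ W.map (Lmap u v)) :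
    ∃ (c : ℝ) (z : {x : V // x ≠ u ∧ x ≠ v} → ℝ), z ∈ W ∧ x = c • δ + Lmap u v z := by
  obtain ⟨y, hy, z', hz', rfl⟩ := Submodule.mem_sup.mp hx
  obtain ⟨c, rfl⟩ := Submodule.mem_span_singleton.mp hy
  obtain ⟨z, hz, rfl⟩ := hz'
  exact ⟨c, z, hz, rfl⟩

lemma sup_rank (W : Submodule ℝ ({x : V // x ≠ u ∧ x ≠ v} → ℝ)) (δ : V → ℝ)
    (hδ : δ u ≠ 0 ∨ δ v ≠ 0) :
    finrank ℝ ↥(span ℝ {δ} ⊔ W.map (Lmap u v)) = finrank ℝ W + 1 := by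
  have hδ0 : δ ≠ 0 := by
    rcases hδ with h | h <;> exact fun h0 => h (by rw [h0]; rfl)
  have hmem : δ ∉ W.map (Lmap u v) := by
    rintro ⟨z, -, rfl⟩
    rcases hδ with h | h
    · exact h (Lmap_u u v z)
    · exact h (Lmap_v u v z)
  have hinf : span ℝ {δ} ⊓ W.map (Lmap u v) = ⊥ := by
    rw [eq_bot_iff]
    rintro x ⟨hx1, hx2⟩
    obtain ⟨c, rfl⟩ := Submodule.mem_span_singleton.mp hx1
    rcases eq_or_ne c 0 with rfl | hc
    · simp
    · refine absurd ?_ hmem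
      have h3 := (W.map (Lmap u v)).smul_mem c⁻¹ hx2
      rwa [smul_smul, inv_mul_cancel₀ hc, one_smul] at h3
  have h1 := Submodule.finrank_sup_add_finrank_inf_eq (span ℝ {δ}) (W.map (Lmap u v))
  rw [hinf, finrank_bot, add_zero, finrank_span_singleton hδ0] at h1
  have h2 : finrank ℝ ↥(W.map (Lmap u v)) = finrank ℝ W :=
    (LinearEquiv.finrank_eq (W.equivMapOfInjective _ (Lmap_inj u v))).symm
  omega

end lift

section emap
variable {V : Type*} [Fintype V] [DecidableEq V] (w : V → V → ℝ) (u v : V)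

noncomputable def fSum (y : V → ℝ) : ℝ := ∑ s : {x : V // x ≠ u ∧ x ≠ v}, w u s.1 * y s.1

lemma fSum_add (x y : V → ℝ) : fSum w u v (x + y) = fSum w u v x + fSum w u v y := by
  simp [fSum, mul_add, Finset.sum_add_distrib]

lemma fSum_smul (c : ℝ) (x : V → ℝ) : fSum w u v (c • x) = c * fSum w u v x := by
  simp only [fSum, Finset.mul_sum, Pi.smul_apply, smul_eq_mul]
  exact Finset.sum_congr rfl fun s _ => by ring

noncomputable def Eto (y : V → ℝ) : V → ℝ :=
  fun t => if t = v then y v - (w u v)⁻¹ * fSum w u v y else y t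

noncomputable def Einv (y : V → ℝ) : V → ℝ :=
  fun t => if t = v then y v + (w u v)⁻¹ * fSum w u v y else y t

lemma Eto_v (y : V → ℝ) : Eto w u v y v = y v - (w u v)⁻¹ * fSum w u v y := if_pos rfl
lemma Eto_ne (y : V → ℝ) {t : V} (h : t ≠ v) : Eto w u v y t = y t := if_neg h
lemma Einv_v (y : V → ℝ) : Einv w u v y v = y v + (w u v)⁻¹ * fSum w u v y := if_pos rfl
lemma Einv_ne (y : V → ℝ) {t : V} (h : t ≠ v) : Einv w u v y t = y t := if_neg h

lemma fSum_Eto (y : V → ℝ) : fSum w u v (Eto w u v y) = fSum w u v y :=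
  Finset.sum_congr rfl fun s _ => by rw [Eto_ne w u v y s.2.2]

lemma fSum_Einv (y : V → ℝ) : fSum w u v (Einv w u v y) = fSum w u v y :=
  Finset.sum_congr rfl fun s _ => by rw [Einv_ne w u v y s.2.2]

noncomputable def Emap : (V → ℝ) ≃ₗ[ℝ] (V → ℝ) where
  toFun := Eto w u v
  invFun := Einv w u v
  left_inv y := by
    show Einv w u v (Eto w u v y) = y
    funext t
    by_cases h : t = v
    · rw [h, Einv_v, Eto_v, fSum_Eto]; ring
    · rw [Einv_ne w u v _ h, Eto_ne w u v _ h]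
  right_inv y := by
    show Eto w u v (Einv w u v y) = y
    funext t
    by_cases h : t = v
    · rw [h, Eto_v, Einv_v, fSum_Einv]; ring
    · rw [Eto_ne w u v _ h, Einv_ne w u v _ h]
  map_add' x y := by
    funext t
    by_cases h : t = v
    · rw [h]
      simp only [Pi.add_apply, Eto_v, fSum_add]
      ring
    · simp only [Pi.add_apply, Eto_ne w u v _ h]
  map_smul' c x := by
    funext t
    by_cases h : t = v
    · rw [h]
      simp only [Pi.smul_apply, Eto_v, fSum_smul, RingHom.id_apply, smul_eq_mul]
      ring
    · simp only [Pi.smul_apply, Eto_ne w u v _ h, RingHom.id_apply, smul_eq_mul]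

lemma Emap_u (hne : u ≠ v) (y : V → ℝ) : Emap w u v y u = y u := Eto_ne w u v y hne
lemma Emap_v (y : V → ℝ) : Emap w u v y v = y v - (w u v)⁻¹ * fSum w u v y := Eto_v w u v y
lemma Emap_s (y : V → ℝ) (s : {x : V // x ≠ u ∧ x ≠ v}) : Emap w u v y s.1 = y s.1 :=
  Eto_ne w u v y s.2.2
lemma fSum_Emap (y : V → ℝ) : fSum w u v (Emap w u v y) = fSum w u v y := fSum_Eto w u v y

end emap

section split
variable {V : Type*} [Fintype V] [DecidableEq V] (u v : V) (hne : u ≠ v)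

lemma sum_split (hne : u ≠ v) (g : V → ℝ) :
    ∑ t, g t = g u + g v + ∑ s : {x : V // x ≠ u ∧ x ≠ v}, g s.1 := by
  classical
  have hsub : ({u, v} : Finset V) ⊆ Finset.univ := Finset.subset_univ _
  have h1 := Finset.sum_sdiff (f := g) hsub
  have h2 : ∑ t ∈ ({u, v} : Finset V), g t = g u + g v := Finset.sum_pair hne
  have h3 : ∑ t ∈ (Finset.univ \ ({u, v} : Finset V)), g t
      = ∑ s : {x : V // x ≠ u ∧ x ≠ v}, g s.1 := by
    rw [← Finset.sum_subtype (Finset.univ \ ({u, v} : Finset V))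
      (fun x => by simp [not_or]) g]
  rw [← h1, h2, h3]
  ring

variable (w : V → V → ℝ)

lemma qf_split (hne : u ≠ v) (hsymm : ∀ x y, w x y = w y x) (huu : w u u = 0) (hvv : w v v = 0)
    (hv0 : ∀ x, x ≠ u → w x v = 0) (x : V → ℝ) :
    qf (Matrix.of w) x = 2 * (w u v) * (x u) * (x v) + 2 * (x u) * (fSum w u v x)
      + qf ((Matrix.of w).submatrix
          (fun i : {x : V // x ≠ u ∧ x ≠ v} => (i : V))
          (fun i : {x : V // x ≠ u ∧ x ≠ v} => (i : V)))
        (fun s => x s.1) := by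
  have hexp : qf (Matrix.of w) x = ∑ t, x t * ∑ j, w t j * x j := by
    simp only [qf, dotProduct, Matrix.mulVec, Matrix.of_apply]
  have hBexp : qf ((Matrix.of w).submatrix
          (fun i : {x : V // x ≠ u ∧ x ≠ v} => (i : V))
          (fun i : {x : V // x ≠ u ∧ x ≠ v} => (i : V)))
        (fun s => x s.1)
      = ∑ s : {x : V // x ≠ u ∧ x ≠ v}, x s.1 * ∑ t : {x : V // x ≠ u ∧ x ≠ v},
          w s.1 t.1 * x t.1 := by
    simp only [qf, dotProduct, Matrix.mulVec, Matrix.submatrix_apply, Matrix.of_apply]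
  have inner1 : ∑ j, w u j * x j = w u v * x v + fSum w u v x := by
    rw [sum_split u v hne, huu, fSum]; ring
  have inner2 : ∑ j, w v j * x j = w u v * x u := by
    rw [sum_split u v hne, hvv, hsymm v u]
    have : ∑ s : {x : V // x ≠ u ∧ x ≠ v}, w v s.1 * x s.1 = 0 :=
      Finset.sum_eq_zero fun s _ => by rw [hsymm v s.1, hv0 s.1 s.2.1, zero_mul]
    rw [this]; ring
  have inner3 : ∀ s : {x : V // x ≠ u ∧ x ≠ v}, ∑ j, w s.1 j * x j
      = w u s.1 * x u + ∑ t : {x : V // x ≠ u ∧ x ≠ v}, w s.1 t.1 * x t.1 := by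
    intro s
    rw [sum_split u v hne, hv0 s.1 s.2.1, hsymm s.1 u]; ring
  have last : ∑ s : {x : V // x ≠ u ∧ x ≠ v}, x s.1 *
        (w u s.1 * x u + ∑ t : {x : V // x ≠ u ∧ x ≠ v}, w s.1 t.1 * x t.1)
      = x u * fSum w u v x + ∑ s : {x : V // x ≠ u ∧ x ≠ v}, x s.1 *
          ∑ t : {x : V // x ≠ u ∧ x ≠ v}, w s.1 t.1 * x t.1 := by
    rw [Finset.sum_congr rfl (fun s _ => mul_add (x s.1) _ _), Finset.sum_add_distrib,
      fSum, Finset.mul_sum]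
    congr 1
    exact Finset.sum_congr rfl fun s _ => by ring
  rw [hexp, sum_split u v hne (fun t => x t * ∑ j, w t j * x j), inner1, inner2,
    Finset.sum_congr rfl (fun s _ => by rw [inner3 s]), last, hBexp]
  ring

lemma qf_Emap (hne : u ≠ v) (hsymm : ∀ x y, w x y = w y x) (huu : w u u = 0) (hvv : w v v = 0)
    (hv0 : ∀ x, x ≠ u → w x v = 0) (ha : w u v ≠ 0) (y : V → ℝ) :
    qf (Matrix.of w) (Emap w u v y) = 2 * (w u v) * (y u) * (y v)
      + qf ((Matrix.of w).submatrix
          (fun i : {x : V // x ≠ u ∧ x ≠ v} => (i : V))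
          (fun i : {x : V // x ≠ u ∧ x ≠ v} => (i : V)))
        (fun s => y s.1) := by
  rw [qf_split u v w hne hsymm huu hvv hv0, Emap_u w u v hne, Emap_v, fSum_Emap]
  have hfun : (fun s : {x : V // x ≠ u ∧ x ≠ v} => Emap w u v y s.1)
      = fun s => y s.1 := funext fun s => Emap_s w u v y s
  rw [hfun]
  field_simp
  ring

end split

set_option maxHeartbeats 1600000 in
theorem aux_main {V : Type*} [Fintype V] [DecidableEq V] (w : V → V → ℝ) (u v : V)
    (hne : u ≠ v) (hsymm : ∀ x y, w x y = w y x) (ha : 0 < w u v)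
    (huu : w u u = 0) (hvv : w v v = 0) (hv0 : ∀ x, x ≠ u → w x v = 0) :
    iPos (Matrix.of w) =
        iPos ((Matrix.of w).submatrix
          (fun i : {x : V // x ≠ u ∧ x ≠ v} => (i : V))
          (fun i : {x : V // x ≠ u ∧ x ≠ v} => (i : V))) + 1 ∧
      iNeg (Matrix.of w) =
        iNeg ((Matrix.of w).submatrix
          (fun i : {x : V // x ≠ u ∧ x ≠ v} => (i : V))
          (fun i : {x : V // x ≠ u ∧ x ≠ v} => (i : V))) + 1 := by
  classical
  have ha' : w u v ≠ 0 := ne_of_gt ha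
  set B := ((Matrix.of w).submatrix
          (fun i : {x : V // x ≠ u ∧ x ≠ v} => (i : V))
          (fun i : {x : V // x ≠ u ∧ x ≠ v} => (i : V))) with hBdef
  have hA : (Matrix.of w).IsHermitian :=
    Matrix.ext fun i j => by simp [Matrix.conjTranspose_apply, hsymm j i]
  have hB : B.IsHermitian :=
    Matrix.ext fun i j => by
      simp [hBdef, Matrix.conjTranspose_apply, hsymm j.1 i.1]
  set E := Emap w u v with hEdef
  set q : (V → ℝ) → ℝ :=
    fun y => 2 * (w u v) * (y u) * (y v) + qf B (fun s => y s.1) with hqdef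
  have hq : ∀ y, qf (Matrix.of w) (E y) = q y :=
    qf_Emap u v w hne hsymm huu hvv hv0 ha'
  -- cardinalities
  have hcards : Fintype.card {x : V // x ≠ u ∧ x ≠ v} + 2 = Fintype.card V := by
    rw [Fintype.card_subtype]
    have hfil : Finset.filter (fun x => x ≠ u ∧ x ≠ v) Finset.univ
        = Finset.univ \ ({u, v} : Finset V) := by
      ext x; simp [not_or]
    have hsub : ({u, v} : Finset V) ⊆ Finset.univ := Finset.subset_univ _
    have hle := Finset.card_le_card hsub
    rw [Finset.card_pair hne] at hle
    rw [hfil, Finset.card_sdiff_of_subset hsub, Finset.card_pair hne]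
    simp only [Finset.card_univ] at *
    omega
  have hrV : finrank ℝ (V → ℝ) = Fintype.card V := Module.finrank_pi ℝ
  have hrS : finrank ℝ ({x : V // x ≠ u ∧ x ≠ v} → ℝ)
      = Fintype.card {x : V // x ≠ u ∧ x ≠ v} := Module.finrank_pi ℝ
  -- subspaces
  obtain ⟨PA, hPAr, hPApos⟩ := exists_pos_subspace hA
  obtain ⟨NA, hNAr, hNAneg⟩ := exists_nonpos_subspace hA
  obtain ⟨PAn, hPAnr, hPAnpos⟩ := exists_neg_subspace hA
  obtain ⟨NAn, hNAnr, hNAnneg⟩ := exists_nonneg_subspace hA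
  obtain ⟨PB, hPBr, hPBpos⟩ := exists_pos_subspace hB
  obtain ⟨NB, hNBr, hNBneg⟩ := exists_nonpos_subspace hB
  obtain ⟨PBn, hPBnr, hPBnpos⟩ := exists_neg_subspace hB
  obtain ⟨NBn, hNBnr, hNBnneg⟩ := exists_nonneg_subspace hB
  have hcA := card_not hA (fun r => 0 < r)
  have hcB := card_not hB (fun r => 0 < r)
  have hcAn := card_not hA (fun r => r < 0)
  have hcBn := card_not hB (fun r => r < 0)
  -- delta vectors
  set δ1 : V → ℝ := fun t => if t = u then 1 else if t = v then 1 else 0 with hδ1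
  set δ2 : V → ℝ := fun t => if t = u then 1 else if t = v then -1 else 0 with hδ2
  set δ3 : V → ℝ := fun t => if t = v then 1 else 0 with hδ3
  have hδ1u : δ1 u = 1 := by simp [hδ1]
  have hδ1v : δ1 v = 1 := by simp [hδ1, (Ne.symm hne : v ≠ u)]
  have hδ1s : ∀ s : {x : V // x ≠ u ∧ x ≠ v}, δ1 s.1 = 0 := fun s => by
    simp [hδ1, s.2.1, s.2.2]
  have hδ2u : δ2 u = 1 := by simp [hδ2]
  have hδ2v : δ2 v = -1 := by simp [hδ2, (Ne.symm hne : v ≠ u)]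
  have hδ2s : ∀ s : {x : V // x ≠ u ∧ x ≠ v}, δ2 s.1 = 0 := fun s => by
    simp [hδ2, s.2.1, s.2.2]
  have hδ3u : δ3 u = 0 := by simp [hδ3, hne]
  have hδ3v : δ3 v = 1 := by simp [hδ3]
  have hδ3s : ∀ s : {x : V // x ≠ u ∧ x ≠ v}, δ3 s.1 = 0 := fun s => by
    simp [hδ3, s.2.2]
  have hqB0 : qf B (0 : {x : V // x ≠ u ∧ x ≠ v} → ℝ) = 0 := by simp [qf]
  -- coordinates of c • δ + L z
  have hcoord : ∀ (c : ℝ) (δ : V → ℝ) (z : {x : V // x ≠ u ∧ x ≠ v} → ℝ),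
      (c • δ + Lmap u v z) u = c * δ u ∧ (c • δ + Lmap u v z) v = c * δ v ∧
        (fun s : {x : V // x ≠ u ∧ x ≠ v} => (c • δ + Lmap u v z) s.1)
          = c • (fun s => δ s.1) + z := by
    intro c δ z
    refine ⟨by simp [Lmap_u], by simp [Lmap_v], funext fun s => ?_⟩
    simp [Lmap_coe]
  -- unfold iPos/iNeg
  simp only [iPos, iNeg, dif_pos hA, dif_pos hB]
  have hδfun1 : (fun s : {x : V // x ≠ u ∧ x ≠ v} => δ1 s.1) = 0 := funext hδ1s
  have hδfun2 : (fun s : {x : V // x ≠ u ∧ x ≠ v} => δ2 s.1) = 0 := funext hδ2s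
  have hδfun3 : (fun s : {x : V // x ≠ u ∧ x ≠ v} => δ3 s.1) = 0 := funext hδ3s
  -- Inequality 1 : iPos B + 1 ≤ iPos A
  have hineq1 : Nat.card {i // 0 < hB.eigenvalues i} + 1
      ≤ Nat.card {i // 0 < hA.eigenvalues i} := by
    set W0 := span ℝ {δ1} ⊔ PB.map (Lmap u v) with hW0
    have hW0r : finrank ℝ W0 = Nat.card {i // 0 < hB.eigenvalues i} + 1 := by
      rw [hW0, sup_rank u v PB δ1 (Or.inl (by rw [hδ1u]; exact one_ne_zero)), hPBr]
    have hW0pos : ∀ x ∈ W0, x ≠ 0 → 0 < q x := by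
      intro x hx hx0
      obtain ⟨c, z, hz, rfl⟩ := sup_mem u v PB δ1 _ hx
      obtain ⟨hu', hv', hs'⟩ := hcoord c δ1 z
      rw [hδfun1, smul_zero, zero_add] at hs'
      simp only [hqdef]
      rw [hu', hv', hs', hδ1u, hδ1v]
      rcases eq_or_ne z 0 with rfl | hz0
      · have hc : c ≠ 0 := by
          rintro rfl
          exact hx0 (by simp)
        rw [hqB0]
        have h2 : 0 < c * c := mul_self_pos.mpr hc
        nlinarith
      · have h1 : 0 < qf B z := hPBpos z hz hz0
        nlinarith [mul_self_nonneg c]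
    have hmap : ∀ x ∈ W0.map (E.toLinearMap), x ≠ 0 → 0 < qf (Matrix.of w) x := by
      intro x hx hx0
      obtain ⟨y, hy, rfl⟩ := Submodule.mem_map.mp hx
      have hy0 : y ≠ 0 := by rintro rfl; exact hx0 (map_zero _)
      rw [show E.toLinearMap y = E y from rfl, hq y]
      exact hW0pos y hy hy0
    have hk := key_le (qf (Matrix.of w)) (W0.map E.toLinearMap) NA hmap hNAneg
    rw [LinearEquiv.finrank_map_eq E W0, hW0r, hNAr, hrV] at hk
    omega
  -- Inequality 2 : iPos A ≤ iPos B + 1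
  have hineq2 : Nat.card {i // 0 < hA.eigenvalues i}
      ≤ Nat.card {i // 0 < hB.eigenvalues i} + 1 := by
    set W1 := PA.map (E.symm.toLinearMap) with hW1
    have hW1pos : ∀ x ∈ W1, x ≠ 0 → 0 < q x := by
      intro x hx hx0
      obtain ⟨y, hy, rfl⟩ := Submodule.mem_map.mp hx
      have hy0 : y ≠ 0 := by rintro rfl; exact hx0 (map_zero _)
      have h1 := hq (E.symm y)
      rw [LinearEquiv.apply_symm_apply] at h1
      rw [show E.symm.toLinearMap y = E.symm y from rfl, ← h1]
      exact hPApos y hy hy0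
    set N1 := span ℝ {δ3} ⊔ NB.map (Lmap u v) with hN1
    have hN1neg : ∀ x ∈ N1, q x ≤ 0 := by
      intro x hx
      obtain ⟨c, z, hz, rfl⟩ := sup_mem u v NB δ3 _ hx
      obtain ⟨hu', hv', hs'⟩ := hcoord c δ3 z
      rw [hδfun3, smul_zero, zero_add] at hs'
      simp only [hqdef]
      rw [hu', hs', hδ3u, mul_zero]
      have := hNBneg z hz
      simpa using this
    have hN1r : finrank ℝ N1 = Nat.card {i // ¬ 0 < hB.eigenvalues i} + 1 := by
      rw [hN1, sup_rank u v NB δ3 (Or.inr (by rw [hδ3v]; exact one_ne_zero)), hNBr]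
    have hk := key_le q W1 N1 hW1pos hN1neg
    rw [hW1, LinearEquiv.finrank_map_eq E.symm PA, hPAr, hN1r, hrV] at hk
    omega
  -- Inequality 3 : iNeg B + 1 ≤ iNeg A
  have hineq3 : Nat.card {i // hB.eigenvalues i < 0} + 1
      ≤ Nat.card {i // hA.eigenvalues i < 0} := by
    set W2 := span ℝ {δ2} ⊔ PBn.map (Lmap u v) with hW2
    have hW2r : finrank ℝ W2 = Nat.card {i // hB.eigenvalues i < 0} + 1 := by
      rw [hW2, sup_rank u v PBn δ2 (Or.inl (by rw [hδ2u]; exact one_ne_zero)), hPBnr]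
    have hW2pos : ∀ x ∈ W2, x ≠ 0 → 0 < - q x := by
      intro x hx hx0
      obtain ⟨c, z, hz, rfl⟩ := sup_mem u v PBn δ2 _ hx
      obtain ⟨hu', hv', hs'⟩ := hcoord c δ2 z
      rw [hδfun2, smul_zero, zero_add] at hs'
      simp only [hqdef]
      rw [hu', hv', hs', hδ2u, hδ2v]
      rcases eq_or_ne z 0 with rfl | hz0
      · have hc : c ≠ 0 := by
          rintro rfl
          exact hx0 (by simp)
        rw [hqB0]
        have h2 : 0 < c * c := mul_self_pos.mpr hc
        nlinarith
      · have h1 : qf B z < 0 := hPBnpos z hz hz0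
        nlinarith [mul_self_nonneg c]
    have hmap : ∀ x ∈ W2.map (E.toLinearMap), x ≠ 0 → 0 < - qf (Matrix.of w) x := by
      intro x hx hx0
      obtain ⟨y, hy, rfl⟩ := Submodule.mem_map.mp hx
      have hy0 : y ≠ 0 := by rintro rfl; exact hx0 (map_zero _)
      rw [show E.toLinearMap y = E y from rfl, hq y]
      exact hW2pos y hy hy0
    have hk := key_le (fun x => - qf (Matrix.of w) x) (W2.map E.toLinearMap) NAn hmap
      (fun x hx => neg_nonpos.mpr (hNAnneg x hx))
    rw [LinearEquiv.finrank_map_eq E W2, hW2r, hNAnr, hrV] at hk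
    omega
  -- Inequality 4 : iNeg A ≤ iNeg B + 1
  have hineq4 : Nat.card {i // hA.eigenvalues i < 0}
      ≤ Nat.card {i // hB.eigenvalues i < 0} + 1 := by
    set W3 := PAn.map (E.symm.toLinearMap) with hW3
    have hW3pos : ∀ x ∈ W3, x ≠ 0 → 0 < - q x := by
      intro x hx hx0
      obtain ⟨y, hy, rfl⟩ := Submodule.mem_map.mp hx
      have hy0 : y ≠ 0 := by rintro rfl; exact hx0 (map_zero _)
      have h1 := hq (E.symm y)
      rw [LinearEquiv.apply_symm_apply] at h1
      rw [show E.symm.toLinearMap y = E.symm y from rfl, ← h1]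
      exact neg_pos.mpr (hPAnpos y hy hy0)
    set N3 := span ℝ {δ3} ⊔ NBn.map (Lmap u v) with hN3
    have hN3neg : ∀ x ∈ N3, - q x ≤ 0 := by
      intro x hx
      obtain ⟨c, z, hz, rfl⟩ := sup_mem u v NBn δ3 _ hx
      obtain ⟨hu', hv', hs'⟩ := hcoord c δ3 z
      rw [hδfun3, smul_zero, zero_add] at hs'
      simp only [hqdef]
      rw [hu', hs', hδ3u, mul_zero]
      have := hNBnneg z hz
      simpa using this
    have hN3r : finrank ℝ N3 = Nat.card {i // ¬ hB.eigenvalues i < 0} + 1 := by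
      rw [hN3, sup_rank u v NBn δ3 (Or.inr (by rw [hδ3v]; exact one_ne_zero)), hNBnr]
    have hk := key_le (fun x => - q x) W3 N3 hW3pos hN3neg
    rw [hW3, LinearEquiv.finrank_map_eq E.symm PAn, hPAnr, hN3r, hrV] at hk
    omega
  exact ⟨by omega, by omega⟩

/-- Deleting a pendant vertex `v` together with its unique neighbour `u`
decreases both inertia indices by exactly one. -/
theorem stmt3 {V : Type*} [Fintype V] [DecidableEq V]
    (G : SimpleGraph V) (w : V → V → ℝ) (hw : IsWeighting G w)
    (u v : V) (huv : G.Adj u v) (hpend : ∀ x, G.Adj x v → x = u) :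
    iPos (Matrix.of w) =
        iPos ((Matrix.of w).submatrix
          (fun i : {x : V // x ≠ u ∧ x ≠ v} => (i : V))
          (fun i : {x : V // x ≠ u ∧ x ≠ v} => (i : V))) + 1 ∧
      iNeg (Matrix.of w) =
        iNeg ((Matrix.of w).submatrix
          (fun i : {x : V // x ≠ u ∧ x ≠ v} => (i : V))
          (fun i : {x : V // x ≠ u ∧ x ≠ v} => (i : V))) + 1 := by
  obtain ⟨hsymm, hpos, hzero⟩ := hw
  have hne : u ≠ v := G.ne_of_adj huv
  exact aux_main w u v hne hsymm (hpos u v huv)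
    (hzero u u (G.irrefl)) (hzero v v (G.irrefl))
    (fun x hx => hzero x v (fun h => hx (hpend x h)))
end

section
/- Let T be a weighted tree on n vertices that has a perfect matching. Then i₊(T) = i₋(T) = n/2; in particular, the weighted adjacency matrix of T is invertible. -/
/-- `M` is a matching of `G`: a set of edges of `G`, pairwise vertex-disjoint. -/
def IsMatchingSet {V : Type*} (G : SimpleGraph V) (M : Finset (Sym2 V)) : Prop :=
  (M : Set (Sym2 V)) ⊆ G.edgeSet ∧
    ∀ e ∈ M, ∀ f ∈ M, e ≠ f → ∀ v, v ∈ e → v ∉ f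

/-- The matching number of `G`. -/
noncomputable def matchNum {V : Type*} (G : SimpleGraph V) : ℕ :=
  sSup {n | ∃ M : Finset (Sym2 V), IsMatchingSet G M ∧ M.card = n}

/-- A vertex is matched in `G` if every maximum matching of `G` covers it. -/
def Matched {V : Type*} (G : SimpleGraph V) (v : V) : Prop :=
  ∀ M : Finset (Sym2 V), IsMatchingSet G M → M.card = matchNum G → ∃ e ∈ M, v ∈ e

section Aux

open SimpleGraph Polynomial Matrix Finset

set_option linter.unusedSectionVars false

variable {V : Type*} [Fintype V] [DecidableEq V] {G : SimpleGraph V}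

/-- In a tree, adjacent vertices have different distances to any root. -/
lemma aux_tree_dist_adj_ne (hG : G.IsTree) (r : V) {u v : V} (h : G.Adj u v) :
    G.dist r u ≠ G.dist r v := by
  intro he
  obtain ⟨p, hp, hpl⟩ := hG.isConnected.exists_path_of_dist r u
  obtain ⟨q, hq, hql⟩ := hG.isConnected.exists_path_of_dist r v
  have hd1 : G.dist u v = 1 := (dist_eq_one_iff_adj).2 h
  have hu : u ∉ q.support := by
    intro hu
    have h1 : G.dist r u ≤ (q.takeUntil u hu).length := dist_le _
    have h2 : G.dist u v ≤ (q.dropUntil u hu).length := dist_le _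
    have h3 : (q.takeUntil u hu).length + (q.dropUntil u hu).length = q.length :=
      by conv_rhs => rw [← q.take_spec hu, Walk.length_append]
    omega
  have hq' : (q.concat h.symm).IsPath := by
    rw [← Walk.isPath_reverse_iff, Walk.reverse_concat]
    exact (hq.reverse).cons (by simpa using hu)
  have hpq := hG.IsAcyclic.path_unique ⟨p, hp⟩ ⟨q.concat h.symm, hq'⟩
  have hl : p.length = (q.concat h.symm).length := by
    simp only [Subtype.ext_iff] at hpq; rw [hpq]
  rw [Walk.length_concat] at hl
  omega

/-- In a tree, distances of adjacent vertices to a root differ by exactly one. -/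
lemma aux_tree_dist_adj_cases (hG : G.IsTree) (r : V) {u v : V} (h : G.Adj u v) :
    G.dist r u = G.dist r v + 1 ∨ G.dist r v = G.dist r u + 1 := by
  have hne := aux_tree_dist_adj_ne hG r h
  have h1 : G.dist u v = 1 := (dist_eq_one_iff_adj).2 h
  have h2 : G.dist v u = 1 := (dist_eq_one_iff_adj).2 h.symm
  have t1 := hG.isConnected.dist_triangle (u := r) (v := u) (w := v)
  have t2 := hG.isConnected.dist_triangle (u := r) (v := v) (w := u)
  omega

/-- In a tree, a vertex has a unique neighbour nearer to the root. -/
lemma aux_tree_parent_unique (hG : G.IsTree) (r : V) {u₁ u₂ x : V}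
    (h1 : G.Adj u₁ x) (h2 : G.Adj u₂ x)
    (hd1 : G.dist r u₁ + 1 = G.dist r x) (hd2 : G.dist r u₂ + 1 = G.dist r x) :
    u₁ = u₂ := by
  obtain ⟨p₁, hp₁, hl₁⟩ := hG.isConnected.exists_path_of_dist r u₁
  obtain ⟨p₂, hp₂, hl₂⟩ := hG.isConnected.exists_path_of_dist r u₂
  have hx : ∀ {u : V} (p : G.Walk r u), p.IsPath → p.length = G.dist r u →
      G.dist r u + 1 = G.dist r x → x ∉ p.support := by
    intro u p hp hl hd hxp
    have h1 : G.dist r x ≤ (p.takeUntil x hxp).length := dist_le _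
    have h3 : (p.takeUntil x hxp).length ≤ p.length := Walk.length_takeUntil_le _ _
    omega
  have hq₁ : (p₁.concat h1).IsPath := by
    rw [← Walk.isPath_reverse_iff, Walk.reverse_concat]
    exact (hp₁.reverse).cons (by simpa using hx p₁ hp₁ hl₁ hd1)
  have hq₂ : (p₂.concat h2).IsPath := by
    rw [← Walk.isPath_reverse_iff, Walk.reverse_concat]
    exact (hp₂.reverse).cons (by simpa using hx p₂ hp₂ hl₂ hd2)
  have hpq := hG.IsAcyclic.path_unique ⟨p₁.concat h1, hq₁⟩ ⟨p₂.concat h2, hq₂⟩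
  simp only [Subtype.ext_iff] at hpq
  exact (Walk.concat_inj hpq).1

/-- Any permutation of a tree's vertices moving every vertex to a neighbour is an involution. -/
lemma aux_tree_invol (hG : G.IsTree) (σ : Equiv.Perm V) (hσ : ∀ v, G.Adj v (σ v)) :
    ∀ v, σ (σ v) = v := by
  by_contra hc
  push_neg at hc
  have hr : Nonempty V := hG.isConnected.nonempty
  obtain ⟨r⟩ := hr
  set S : Finset V := Finset.univ.filter (fun v => σ (σ v) ≠ v) with hS
  have hSne : S.Nonempty := by
    obtain ⟨v, hv⟩ := hc
    exact ⟨v, by simp [hS, hv]⟩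
  obtain ⟨x, hxS, hxmax⟩ := S.exists_max_image (fun v => G.dist r v) hSne
  have hx : σ (σ x) ≠ x := by simpa [hS] using hxS
  have hadj1 : G.Adj (σ x) x := (hσ x).symm
  have hy : σ (σ (σ⁻¹ x)) ≠ σ⁻¹ x := by
    rw [(by exact Equiv.apply_symm_apply σ x : σ (σ⁻¹ x) = x)]
    intro h
    apply hx
    have h2 := congr_arg σ h
    rwa [(by exact Equiv.apply_symm_apply σ x : σ (σ⁻¹ x) = x)] at h2
  have hadj2 : G.Adj (σ⁻¹ x) x := by
    have := hσ (σ⁻¹ x)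
    rwa [(by exact Equiv.apply_symm_apply σ x : σ (σ⁻¹ x) = x)] at this
  have hσxS : σ x ∈ S := by
    simp only [hS, Finset.mem_filter, Finset.mem_univ, true_and]
    intro h
    exact hx (σ.injective h)
  have hσyS : σ⁻¹ x ∈ S := by
    simp only [hS, Finset.mem_filter, Finset.mem_univ, true_and]
    exact hy
  have hd1 : G.dist r (σ x) + 1 = G.dist r x := by
    have hne := aux_tree_dist_adj_ne hG r hadj1
    have hle1 : G.dist r x ≤ G.dist r (σ x) + 1 := by
      have := hG.isConnected.dist_triangle (u := r) (v := σ x) (w := x)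
      have h1 : G.dist (σ x) x = 1 := dist_eq_one_iff_adj.2 hadj1
      omega
    have hle2 : G.dist r (σ x) ≤ G.dist r x := hxmax _ hσxS
    omega
  have hd2 : G.dist r (σ⁻¹ x) + 1 = G.dist r x := by
    have hne := aux_tree_dist_adj_ne hG r hadj2
    have hle1 : G.dist r x ≤ G.dist r (σ⁻¹ x) + 1 := by
      have := hG.isConnected.dist_triangle (u := r) (v := σ⁻¹ x) (w := x)
      have h1 : G.dist (σ⁻¹ x) x = 1 := dist_eq_one_iff_adj.2 hadj2
      omega
    have hle2 : G.dist r (σ⁻¹ x) ≤ G.dist r x := hxmax _ hσyS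
    omega
  have := aux_tree_parent_unique hG r hadj1 hadj2 hd1 hd2
  apply hx
  rw [this, (by exact Equiv.apply_symm_apply σ x : σ (σ⁻¹ x) = x)]

/-- Sign and parity data for a fixed-point-free involution. -/
lemma aux_invol_sign (σ : Equiv.Perm V)
    (h2 : ∀ v, σ (σ v) = v) (hfp : ∀ v, σ v ≠ v) :
    Fintype.card V = 2 * (Fintype.card V / 2) ∧
      Equiv.Perm.sign σ = (-1) ^ (Fintype.card V + Fintype.card V / 2) := by
  have hσ2 : σ ^ 2 = 1 := by
    ext v; simp [pow_succ, h2 v]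
  have hord : orderOf σ ∣ 2 := orderOf_dvd_of_pow_eq_one hσ2
  have hct : ∀ n ∈ σ.cycleType, n = 2 := by
    intro n hn
    have h1 : n ∣ orderOf σ := (Multiset.dvd_lcm hn).trans (by rw [Equiv.Perm.lcm_cycleType])
    have h2' : 2 ≤ n := Equiv.Perm.two_le_of_mem_cycleType hn
    have := Nat.le_of_dvd (by norm_num) (h1.trans hord)
    omega
  have hrep : σ.cycleType = Multiset.replicate σ.cycleType.card 2 :=
    Multiset.eq_replicate_card.2 hct
  have hsum : σ.cycleType.sum = Fintype.card V := by
    rw [Equiv.Perm.sum_cycleType]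
    rw [show σ.support = Finset.univ from ?_, Finset.card_univ]
    ext v
    simp [Equiv.Perm.mem_support, hfp v]
  have h2card : 2 * σ.cycleType.card = Fintype.card V := by
    rw [← hsum, hrep]; simp [Multiset.sum_replicate, mul_comm]
  constructor
  · omega
  · rw [Equiv.Perm.sign_of_cycleType]
    congr 1
    omega

/-- From a perfect matching, a permutation moving every vertex to a neighbour. -/
lemma aux_matching_perm (G : SimpleGraph V) (M : Finset (Sym2 V))
    (hM : IsMatchingSet G M) (hcov : ∀ v : V, ∃ e ∈ M, v ∈ e) :
    ∃ σ : Equiv.Perm V, ∀ v, G.Adj v (σ v) := by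
  have huniq : ∀ v : V, ∃! e, e ∈ M ∧ v ∈ e := by
    intro v
    obtain ⟨e, he, hve⟩ := hcov v
    refine ⟨e, ⟨he, hve⟩, ?_⟩
    rintro f ⟨hf, hvf⟩
    by_contra hne
    exact hM.2 f hf e he hne v hvf hve
  let E : V → Sym2 V := fun v => M.choose (fun e => v ∈ e) (huniq v)
  have hEmem : ∀ v, E v ∈ M := fun v => Finset.choose_mem (fun e => v ∈ e) M (huniq v)
  have hvE : ∀ v, v ∈ E v := fun v => Finset.choose_property (fun e => v ∈ e) M (huniq v)
  let f : V → V := fun v => Sym2.Mem.other' (hvE v)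
  have hspec : ∀ v, s(v, f v) = E v := fun v => Sym2.other_spec' (hvE v)
  have hadj : ∀ v, G.Adj v (f v) := by
    intro v
    have : E v ∈ G.edgeSet := hM.1 (by simpa using hEmem v)
    rw [← hspec v] at this
    exact this
  have hgen : ∀ (a : V) (z₁ z₂ : Sym2 V) (h₁ : a ∈ z₁) (h₂ : a ∈ z₂), z₁ = z₂ →
      Sym2.Mem.other' h₁ = Sym2.Mem.other' h₂ := by
    rintro a z₁ z₂ h₁ h₂ rfl; rfl
  have hinv : Function.Involutive f := by
    intro v
    have hmem : f v ∈ E v := Sym2.other_mem' (hvE v)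
    have hEf : E (f v) = E v := by
      rcases huniq (f v) with ⟨e, _, hu⟩
      rw [hu (E (f v)) ⟨hEmem _, hvE _⟩, hu (E v) ⟨hEmem v, hmem⟩]
    have : f (f v) = Sym2.Mem.other' hmem := hgen (f v) _ _ (hvE (f v)) hmem hEf
    rw [this, Sym2.other_invol']
  exact ⟨hinv.toPerm f, hadj⟩

variable {n : Type*} [Fintype n] [DecidableEq n] {R : Type*} [CommRing R]

lemma aux_charmatrix_conj (P M Q : Matrix n n R) (hPQ : P * Q = 1) :
    charmatrix (P * M * Q) = P.map C * charmatrix M * Q.map C := by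
  unfold charmatrix
  have hmapPQ : P.map (C : R →+* R[X]) * Q.map C = 1 := by
    rw [← Matrix.map_mul, hPQ]
    simp
  rw [RingHom.mapMatrix_apply, RingHom.mapMatrix_apply, Matrix.mul_sub, Matrix.sub_mul]
  congr 1
  · rw [show (Matrix.scalar n) (X : R[X]) = (X : R[X]) • (1 : Matrix n n R[X]) from
      by rw [Matrix.scalar_apply, Matrix.smul_one_eq_diagonal], mul_smul_comm, mul_one,
      smul_mul_assoc, hmapPQ]
  · rw [← Matrix.map_mul, ← Matrix.map_mul]

lemma aux_charpoly_conj (P M Q : Matrix n n R) (hPQ : P * Q = 1) (hQP : Q * P = 1) :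
    (P * M * Q).charpoly = M.charpoly := by
  have hdet : (P.map (C : R →+* R[X])).det * (Q.map C).det = 1 := by
    rw [← Matrix.det_mul, ← Matrix.map_mul, hPQ]
    simp
  rw [Matrix.charpoly, aux_charmatrix_conj P M Q hPQ, Matrix.det_mul, Matrix.det_mul,
    Matrix.charpoly]
  rw [mul_comm (P.map (C : R →+* R[X])).det, mul_assoc, hdet, mul_one]

lemma aux_charpoly_diag (d : n → R) : (Matrix.diagonal d).charpoly = ∏ i, (X - C (d i)) := by
  rw [Matrix.charpoly, show charmatrix (Matrix.diagonal d)
      = Matrix.diagonal (fun i => X - C (d i)) from ?_, Matrix.det_diagonal]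
  ext i j
  by_cases h : i = j
  · subst h; simp [charmatrix_apply_eq]
  · simp [charmatrix_apply_ne _ _ _ h, Matrix.diagonal_apply_ne _ h]

lemma aux_count (f : n → ℝ) (p : ℝ → Prop) [DecidablePred p] :
    Nat.card {i // p (f i)} = Multiset.countP p (Finset.univ.val.map f) := by
  rw [Nat.card_eq_fintype_card, Fintype.card_subtype, Multiset.countP_map]
  rfl

end Aux


open SimpleGraph Polynomial Matrix Finset in
/-- A weighted tree with a perfect matching has `i₊ = i₋ = n/2`; in particular
its weighted adjacency matrix is invertible. -/
theorem stmt7 {V : Type*} [Fintype V] [DecidableEq V]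
    (G : SimpleGraph V) (hG : G.IsTree) (w : V → V → ℝ) (hw : IsWeighting G w)
    (hpm : ∃ M : Finset (Sym2 V), IsMatchingSet G M ∧ ∀ v : V, ∃ e ∈ M, v ∈ e) :
    iPos (Matrix.of w) = Fintype.card V / 2 ∧
      iNeg (Matrix.of w) = Fintype.card V / 2 ∧
      (Matrix.of w).det ≠ 0 := by
  classical
  obtain ⟨M, hM, hMcov⟩ := hpm
  set A : Matrix V V ℝ := Matrix.of w with hA
  set N : ℕ := Fintype.card V with hN
  have hAapp : ∀ u v, A u v = w u v := fun u v => rfl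
  -- A is symmetric
  have hherm : A.IsHermitian := by
    ext i j
    simp only [Matrix.conjTranspose_apply, star_trivial, hAapp, hw.1 j i]
  -- the good permutation from the matching
  obtain ⟨σ₀, hσ₀⟩ := aux_matching_perm G M hM hMcov
  -- sign of good permutations
  set c : ℝ := (-1 : ℝ) ^ (N + N / 2) with hc
  have hcc : c * c = 1 := by
    rw [hc, ← pow_add]
    exact Even.neg_one_pow ⟨N + N / 2, by ring⟩
  have hsign : ∀ σ : Equiv.Perm V, (∀ i, G.Adj (σ i) i) →
      ((Equiv.Perm.sign σ : ℤ) : ℝ) = c := by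
    intro σ hg
    have hinv := aux_tree_invol hG σ (fun v => (hg v).symm)
    have hfp : ∀ v, σ v ≠ v := fun v => (hg v).ne
    have := (aux_invol_sign σ hinv hfp).2
    rw [this]
    push_cast
    rfl
  -- determinant is nonzero
  have hdetpos : 0 < c * A.det := by
    rw [Matrix.det_apply, Finset.mul_sum]
    apply Finset.sum_pos'
    · intro σ _
      by_cases hg : ∀ i, G.Adj (σ i) i
      · have h1 : (0:ℝ) < ∏ i, A (σ i) i :=
          Finset.prod_pos (fun i _ => hw.2.1 _ _ (hg i))
        have h2 : c * ((Equiv.Perm.sign σ : ℤ) : ℝ) = 1 := by rw [hsign σ hg]; exact hcc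
        rw [Units.smul_def, zsmul_eq_mul, ← mul_assoc, h2, one_mul]
        exact h1.le
      · push_neg at hg
        obtain ⟨i, hi⟩ := hg
        have h0 : A (σ i) i = 0 := hw.2.2 _ _ hi
        have hz : ∏ j, A (σ j) j = 0 := Finset.prod_eq_zero (Finset.mem_univ i) h0
        rw [Units.smul_def, zsmul_eq_mul, hz]
        simp
    · refine ⟨σ₀, Finset.mem_univ _, ?_⟩
      have hg : ∀ i, G.Adj (σ₀ i) i := fun i => (hσ₀ i).symm
      have h1 : (0:ℝ) < ∏ i, A (σ₀ i) i :=
        Finset.prod_pos (fun i _ => hw.2.1 _ _ (hg i))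
      have h2 : c * ((Equiv.Perm.sign σ₀ : ℤ) : ℝ) = 1 := by rw [hsign σ₀ hg]; exact hcc
      rw [Units.smul_def, zsmul_eq_mul, ← mul_assoc, h2, one_mul]
      exact h1
  have hdetne : A.det ≠ 0 := by
    intro h
    rw [h, mul_zero] at hdetpos
    exact lt_irrefl _ hdetpos
  -- the signing D
  have hrne : Nonempty V := hG.isConnected.nonempty
  obtain ⟨r⟩ := hrne
  set D : Matrix V V ℝ := Matrix.diagonal (fun v => (-1 : ℝ) ^ (G.dist r v)) with hD
  have hDD : D * D = 1 := by
    rw [hD, Matrix.diagonal_mul_diagonal]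
    rw [show (fun v => (-1:ℝ) ^ G.dist r v * (-1:ℝ) ^ G.dist r v) = fun _ => (1:ℝ) from ?_,
      Matrix.diagonal_one]
    funext v
    rw [← pow_add]
    exact Even.neg_one_pow ⟨G.dist r v, by ring⟩
  have hDAD : D * A * D = -A := by
    ext u v
    rw [hD]
    simp only [Matrix.neg_apply, Matrix.mul_diagonal, Matrix.diagonal_mul]
    by_cases h : G.Adj u v
    · have hEu : ((-1:ℝ)) ^ (G.dist r u) * ((-1:ℝ)) ^ (G.dist r u) = 1 := by
        rw [← pow_add]; exact Even.neg_one_pow ⟨_, rfl⟩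
      have hEv : ((-1:ℝ)) ^ (G.dist r v) * ((-1:ℝ)) ^ (G.dist r v) = 1 := by
        rw [← pow_add]; exact Even.neg_one_pow ⟨_, rfl⟩
      rcases aux_tree_dist_adj_cases hG r h with h1 | h1 <;> rw [h1, pow_succ]
      · linear_combination (-(A u v)) * hEv
      · linear_combination (-(A u v)) * hEu
    · rw [hAapp, hw.2.2 _ _ h]; ring
  -- eigenvalues
  set eig : V → ℝ := hherm.eigenvalues with heig
  have hU1 : (hherm.eigenvectorUnitary : Matrix V V ℝ) * star (hherm.eigenvectorUnitary : Matrix V V ℝ) = 1 :=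
    Matrix.mem_unitaryGroup_iff.mp (hherm.eigenvectorUnitary).2
  have hU2 : star (hherm.eigenvectorUnitary : Matrix V V ℝ) * (hherm.eigenvectorUnitary : Matrix V V ℝ) = 1 :=
    Matrix.mem_unitaryGroup_iff'.mp (hherm.eigenvectorUnitary).2
  have hofReal : Matrix.diagonal (RCLike.ofReal ∘ eig) = Matrix.diagonal eig := by
    congr 1
  have hchar : A.charpoly = ∏ i, (X - C (eig i)) := by
    conv_lhs => rw [hherm.spectral_theorem]
    rw [Unitary.conjStarAlgAut_apply, hofReal, aux_charpoly_conj _ _ _ hU1 hU2, aux_charpoly_diag]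
  have hcharneg : (-A).charpoly = ∏ i, (X - C (-(eig i))) := by
    have hnegA : -A = (hherm.eigenvectorUnitary : Matrix V V ℝ) *
        Matrix.diagonal (fun i => -(eig i)) * star (hherm.eigenvectorUnitary : Matrix V V ℝ) := by
      conv_lhs => rw [hherm.spectral_theorem]
      rw [Unitary.conjStarAlgAut_apply, hofReal, show Matrix.diagonal (fun i => -(eig i)) = -(Matrix.diagonal eig) from
        (Matrix.diagonal_neg eig).symm, Matrix.mul_neg, Matrix.neg_mul]
    rw [hnegA, aux_charpoly_conj _ _ _ hU1 hU2, aux_charpoly_diag]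
  have hcharDAD : A.charpoly = (-A).charpoly := by
    rw [← hDAD, aux_charpoly_conj D A D hDD hDD]
  -- multiset of eigenvalues is symmetric
  set m : Multiset ℝ := Finset.univ.val.map eig with hm
  have hms : m = Finset.univ.val.map (fun i => -(eig i)) := by
    have e1 : ∏ i, (X - C (eig i)) = (m.map fun a => X - C a).prod := by
      rw [hm, Multiset.map_map]; rfl
    have e2 : ∏ i, (X - C (-(eig i)))
        = ((Finset.univ.val.map (fun i => -(eig i))).map fun a => X - C a).prod := by
      rw [Multiset.map_map]; rfl
    have h1 := congr_arg Polynomial.roots (hchar.symm.trans (hcharDAD.trans hcharneg))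
    rwa [e1, e2, Polynomial.roots_multiset_prod_X_sub_C,
      Polynomial.roots_multiset_prod_X_sub_C] at h1
  -- all eigenvalues are nonzero
  have heigne : ∀ i, eig i ≠ 0 := by
    have hdet2 : A.det = ∏ i, eig i := by
      have := hherm.det_eq_prod_eigenvalues
      simpa using this
    rw [hdet2] at hdetne
    exact fun i => Finset.prod_ne_zero_iff.mp hdetne i (Finset.mem_univ i)
  -- counting
  have hiPos : iPos A = Multiset.countP (fun x => 0 < x) m := by
    rw [iPos, dif_pos hherm]
    exact aux_count eig (fun x => 0 < x)
  have hiNeg : iNeg A = Multiset.countP (fun x => x < 0) m := by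
    rw [iNeg, dif_pos hherm]
    exact aux_count eig (fun x => x < 0)
  have hsymmcount : Multiset.countP (fun x => 0 < x) m = Multiset.countP (fun x => x < 0) m := by
    conv_lhs => rw [hms]
    rw [hm, Multiset.countP_map, Multiset.countP_map]
    congr 1
    ext i
    simp [neg_pos]
  have htot : Multiset.countP (fun x => 0 < x) m + Multiset.countP (fun x => x < 0) m = N := by
    rw [hm, Multiset.countP_map, Multiset.countP_map]
    have e1 : Multiset.card (Multiset.filter (fun a => 0 < eig a) Finset.univ.val)
        = (Finset.univ.filter (fun a => 0 < eig a)).card := rfl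
    have e2 : Multiset.card (Multiset.filter (fun a => eig a < 0) Finset.univ.val)
        = (Finset.univ.filter (fun a => ¬ 0 < eig a)).card := by
      congr 1
      apply Multiset.filter_congr
      intro i _
      have := heigne i
      constructor
      · intro h; exact not_lt.2 h.le
      · intro h; exact lt_of_le_of_ne (not_lt.1 h) this
    rw [e1, e2, Finset.card_filter_add_card_filter_not]
    exact Finset.card_univ
  refine ⟨?_, ?_, hdetne⟩ <;> omega
end

section
/- Let Cₙ be a weighted cycle of order n with arbitrary positive edge weights. If n ≡ 1 (mod 4) then i₊(Cₙ) = (n+1)/2 and i₋(Cₙ) = (n−1)/2; if n ≡ 2 (mod 4) then i₊(Cₙ) = i₋(Cₙ) = n/2; if n ≡ 3 (mod 4) then i₊(Cₙ) = (n−1)/2 and i₋(Cₙ) = (n+1)/2. In all three cases the weighted adjacency matrix is invertible, regardless of the weights. -/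
section Aux

open Matrix Finset


open Matrix Finset

variable {n : ℕ}

lemma quad_eigen (A : Matrix (Fin n) (Fin n) ℝ) (h : A.IsHermitian) (x : Fin n → ℝ) :
    x ⬝ᵥ A *ᵥ x = ∑ i, h.eigenvalues i *
      ((star (h.eigenvectorUnitary : Matrix (Fin n) (Fin n) ℝ) *ᵥ x) i) ^ 2 := by
  set U := (h.eigenvectorUnitary : Matrix (Fin n) (Fin n) ℝ) with hU
  have spec : A = U * Matrix.diagonal (fun i => h.eigenvalues i) * star U := by
    have := h.spectral_theorem
    simpa using this
  conv_lhs => rw [spec]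
  rw [← Matrix.mulVec_mulVec, ← Matrix.mulVec_mulVec, Matrix.dotProduct_mulVec]
  have hv : x ᵥ* U = star U *ᵥ x := by
    ext i
    simp [Matrix.vecMul, Matrix.mulVec, dotProduct, Matrix.star_apply, mul_comm]
  rw [hv]
  simp [dotProduct, Matrix.mulVec_diagonal, sq]
  exact Finset.sum_congr rfl fun i _ => by ring

lemma disjoint_ker_dim (S T : Finset (Fin n)) (f g : Fin n → ((Fin n → ℝ) →ₗ[ℝ] ℝ))
    (h0 : ∀ x, (∀ i ∈ S, f i x = 0) → (∀ i ∈ T, g i x = 0) → x = 0) :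
    n ≤ S.card + T.card := by
  classical
  set F : (Fin n → ℝ) →ₗ[ℝ] (S → ℝ) := LinearMap.pi (fun i => f i) with hF
  set G : (Fin n → ℝ) →ₗ[ℝ] (T → ℝ) := LinearMap.pi (fun i => g i) with hG
  have dim_fun : Module.finrank ℝ (Fin n → ℝ) = n := by
    rw [Module.finrank_fintype_fun_eq_card, Fintype.card_fin]
  have hker : ∀ {m : Type} [Fintype m] [DecidableEq m] (H : (Fin n → ℝ) →ₗ[ℝ] (m → ℝ)),
      n ≤ Module.finrank ℝ (LinearMap.ker H) + Fintype.card m := by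
    intro m _ _ H
    have h1 := LinearMap.finrank_range_add_finrank_ker H
    have h2 : Module.finrank ℝ (LinearMap.range H) ≤ Fintype.card m := by
      refine le_trans (Submodule.finrank_le _) ?_
      rw [Module.finrank_fintype_fun_eq_card]
    omega
  have hFk := hker F
  have hGk := hker G
  rw [Fintype.card_coe] at hFk hGk
  have hdisj : LinearMap.ker F ⊓ LinearMap.ker G = ⊥ := by
    rw [Submodule.eq_bot_iff]
    rintro x ⟨hx1, hx2⟩
    rw [SetLike.mem_coe, LinearMap.mem_ker, hF] at hx1
    rw [SetLike.mem_coe, LinearMap.mem_ker, hG] at hx2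
    refine h0 x (fun i hi => ?_) (fun i hi => ?_)
    · exact congrFun hx1 ⟨i, hi⟩
    · exact congrFun hx2 ⟨i, hi⟩
  have := Submodule.finrank_sup_add_finrank_inf_eq (LinearMap.ker F) (LinearMap.ker G)
  rw [hdisj] at this
  have hsup : Module.finrank ℝ (LinearMap.ker F ⊔ LinearMap.ker G : Submodule ℝ (Fin n → ℝ)) ≤ n := by
    exact le_trans (Submodule.finrank_le _) (le_of_eq dim_fun)
  simp [finrank_bot] at this
  omega

lemma inertia_of_diag (A : Matrix (Fin n) (Fin n) ℝ) (h : A.IsHermitian)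
    (d : Fin n → ℝ) (L : Fin n → ((Fin n → ℝ) →ₗ[ℝ] ℝ))
    (hQ : ∀ x, x ⬝ᵥ A *ᵥ x = ∑ i, d i * (L i x)^2)
    (hd : ∀ i, d i ≠ 0)
    (hinj : ∀ x, (∀ i, L i x = 0) → x = 0) :
    Nat.card {i // 0 < h.eigenvalues i} = (univ.filter fun i => 0 < d i).card ∧
    Nat.card {i // h.eigenvalues i < 0} = (univ.filter fun i => d i < 0).card ∧
    (∀ i, h.eigenvalues i ≠ 0) := by
  classical
  set lam := h.eigenvalues with hlam
  set U := (h.eigenvectorUnitary : Matrix (Fin n) (Fin n) ℝ) with hU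
  set y : (Fin n → ℝ) →ₗ[ℝ] (Fin n → ℝ) := (star U).mulVecLin with hy
  have hQ2 : ∀ x, x ⬝ᵥ A *ᵥ x = ∑ i, lam i * (y x i)^2 := fun x => quad_eigen A h x
  set p := (univ.filter fun i => 0 < d i).card with hp
  set q := (univ.filter fun i => d i < 0).card with hq
  set p' := (univ.filter fun i => 0 < lam i).card with hp'
  set q' := (univ.filter fun i => lam i < 0).card with hq'
  set z' := (univ.filter fun i => lam i = 0).card with hz'
  have indic : ∀ (P : Fin n → Prop) [DecidablePred P],
      (univ.filter fun i => P i).card = ∑ i : Fin n, if P i then 1 else 0 := by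
    intro P _; rw [Finset.card_filter]
  have hpq : p + q = n := by
    rw [hp, hq, indic, indic, ← Finset.sum_add_distrib]
    have : ∀ i : Fin n, ((if 0 < d i then 1 else 0) + (if d i < 0 then 1 else 0) : ℕ) = 1 := by
      intro i
      rcases lt_trichotomy (d i) 0 with h2|h2|h2
      · rw [if_neg (by linarith), if_pos h2]
      · exact absurd h2 (hd i)
      · rw [if_pos h2, if_neg (by linarith)]
    rw [Finset.sum_congr rfl fun i _ => this i]
    simp
  have hpqz : p' + (q' + z') = n := by
    rw [hp', hq', hz', indic, indic, indic, ← Finset.sum_add_distrib, ← Finset.sum_add_distrib]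
    have : ∀ i : Fin n, ((if 0 < lam i then 1 else 0) + ((if lam i < 0 then 1 else 0)
        + (if lam i = 0 then 1 else 0)) : ℕ) = 1 := by
      intro i
      rcases lt_trichotomy (lam i) 0 with h2|h2|h2
      · rw [if_neg (by linarith), if_pos h2, if_neg (by linarith)]
      · rw [if_neg (by simp [h2]), if_neg (by simp [h2]), if_pos h2]
      · rw [if_pos h2, if_neg (by linarith), if_neg (by linarith)]
    rw [Finset.sum_congr rfl fun i _ => this i]
    simp
  have ineq1 : n ≤ q + p' := by
    rw [hq, hp']
    refine disjoint_ker_dim _ _ L (fun i => (LinearMap.proj i).comp y) ?_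
    intro x hx1 hx2
    simp only [Finset.mem_filter, Finset.mem_univ, true_and, LinearMap.comp_apply,
      LinearMap.proj_apply] at hx1 hx2
    have e1 : (0:ℝ) ≤ ∑ i, d i * (L i x)^2 := by
      refine Finset.sum_nonneg fun i _ => ?_
      rcases lt_trichotomy (d i) 0 with h2|h2|h2
      · rw [hx1 i h2]; simp
      · exact absurd h2 (hd i)
      · positivity
    have e2 : ∑ i, lam i * (y x i)^2 ≤ 0 := by
      refine Finset.sum_nonpos fun i _ => ?_
      rcases lt_or_ge 0 (lam i) with h2|h2
      · rw [hx2 i h2]; simp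
      · exact mul_nonpos_of_nonpos_of_nonneg h2 (sq_nonneg _)
    have e3 : ∑ i, d i * (L i x)^2 = 0 := le_antisymm (by rw [(hQ x).symm.trans (hQ2 x)]; exact e2) e1
    refine hinj x fun i => ?_
    have := (Finset.sum_eq_zero_iff_of_nonneg (fun i _ => by
      rcases lt_trichotomy (d i) 0 with h2|h2|h2
      · rw [hx1 i h2]; simp
      · exact absurd h2 (hd i)
      · positivity)).mp e3 i (Finset.mem_univ i)
    rcases mul_eq_zero.mp this with h2|h2
    · exact absurd h2 (hd i)
    · exact pow_eq_zero_iff (by norm_num) |>.mp h2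
  have ineq2 : n ≤ p + q' := by
    rw [hp, hq']
    refine disjoint_ker_dim _ _ L (fun i => (LinearMap.proj i).comp y) ?_
    intro x hx1 hx2
    simp only [Finset.mem_filter, Finset.mem_univ, true_and, LinearMap.comp_apply,
      LinearMap.proj_apply] at hx1 hx2
    have e1 : ∑ i, d i * (L i x)^2 ≤ 0 := by
      refine Finset.sum_nonpos fun i _ => ?_
      rcases lt_trichotomy (d i) 0 with h2|h2|h2
      · exact mul_nonpos_of_nonpos_of_nonneg (le_of_lt h2) (sq_nonneg _)
      · exact absurd h2 (hd i)
      · rw [hx1 i h2]; simp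
    have e2 : (0:ℝ) ≤ ∑ i, lam i * (y x i)^2 := by
      refine Finset.sum_nonneg fun i _ => ?_
      rcases lt_trichotomy (lam i) 0 with h2|h2|h2
      · rw [hx2 i h2]; simp
      · rw [h2]; simp
      · positivity
    have e3 : ∑ i, d i * (L i x)^2 = 0 := le_antisymm e1 (((hQ x).symm.trans (hQ2 x)) ▸ e2)
    refine hinj x fun i => ?_
    have := (Finset.sum_eq_zero_iff_of_nonpos (fun i _ => by
      rcases lt_trichotomy (d i) 0 with h2|h2|h2
      · exact mul_nonpos_of_nonpos_of_nonneg (le_of_lt h2) (sq_nonneg _)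
      · exact absurd h2 (hd i)
      · rw [hx1 i h2]; simp)).mp e3 i (Finset.mem_univ i)
    rcases mul_eq_zero.mp this with h2|h2
    · exact absurd h2 (hd i)
    · exact pow_eq_zero_iff (by norm_num) |>.mp h2
  have hz0 : z' = 0 := by omega
  have hnonzero : ∀ i, lam i ≠ 0 := by
    intro i
    have : (univ.filter fun i => lam i = 0) = ∅ := Finset.card_eq_zero.mp hz0
    intro hc
    have h3 : i ∈ (univ.filter fun i => lam i = 0) :=
      Finset.mem_filter.mpr ⟨Finset.mem_univ i, hc⟩
    rw [this] at h3
    exact absurd h3 (Finset.notMem_empty i)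
  refine ⟨?_, ?_, hnonzero⟩
  · rw [Nat.card_eq_fintype_card, Fintype.card_subtype]
    omega
  · rw [Nat.card_eq_fintype_card, Fintype.card_subtype]
    omega



/-- the (halved) cycle quadratic form: `∑_{i<m-1} c i * x i * x (i+1) + b * x 0 * x (m-1)`. -/
noncomputable def Qc (m : ℕ) (c : ℕ → ℝ) (b : ℝ) (x : ℕ → ℝ) : ℝ :=
  (∑ i ∈ Finset.range (m-1), c i * x i * x (i+1)) + b * x 0 * x (m-1)

/-- target number of positive squares -/
noncomputable def tgt (m : ℕ) (b : ℝ) : ℕ :=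
  if m % 2 = 0 then m/2 else if (m % 4 = 3 ↔ 0 < b) then (m-1)/2 else (m+1)/2

lemma tgt_le (m : ℕ) (b : ℝ) : tgt m b ≤ m := by
  unfold tgt; split_ifs <;> omega

lemma tgt_step (m' : ℕ) (hm' : 3 ≤ m') (b b' : ℝ) (hb : b ≠ 0) (hsign : 0 < b' ↔ b < 0) :
    tgt (m'+2) b = 1 + tgt m' b' := by
  unfold tgt
  by_cases hpar : m' % 2 = 0
  · rw [if_pos (by omega), if_pos hpar]; omega
  · rw [if_neg (by omega), if_neg hpar]
    rcases lt_or_gt_of_ne hb with hneg|hpos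
    · have hb'pos : 0 < b' := hsign.mpr hneg
      by_cases h3 : m' % 4 = 3
      · rw [if_pos (iff_of_false (by omega) (by linarith)), if_pos (iff_of_true h3 hb'pos)]
        omega
      · have h1 : m' % 4 = 1 := by omega
        rw [if_neg (fun h => by have := h.mp (by omega); linarith),
          if_neg (fun h => by have := h.mpr hb'pos; omega)]
        omega
    · have hb'neg : ¬ (0 < b') := by rw [hsign]; linarith
      by_cases h3 : m' % 4 = 3
      · rw [if_neg (fun h => by have := h.mpr hpos; omega),
          if_neg (fun h => hb'neg (h.mp h3))]
        omega
      · have h1 : m' % 4 = 1 := by omega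
        rw [if_pos (iff_of_true (by omega) hpos), if_pos (iff_of_false (by omega) hb'neg)]
        omega

lemma Qc_step (m' : ℕ) (hm' : 3 ≤ m') (c : ℕ → ℝ) (b : ℝ) (hc0 : c 0 ≠ 0) (x : ℕ → ℝ) :
    Qc (m'+2) c b x = (c 0 * x 1 + b * x (m'+1)) * (x 0 + (c 1 / c 0) * x 2)
      + Qc m' (fun i => c (i+2)) (-(c 1 * b / c 0)) (fun j => x (j+2)) := by
  obtain ⟨k, rfl⟩ : ∃ k, m' = k + 3 := ⟨m' - 3, by omega⟩
  unfold Qc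
  rw [show k+3+2-1 = (k+2)+1+1 from by omega, show k+3-1 = k+2 from by omega,
    Finset.sum_range_succ', Finset.sum_range_succ']
  simp only [add_assoc]
  norm_num
  field_simp
  ring

lemma cycle_diag_three (c : ℕ → ℝ) (b : ℝ) (hb : b ≠ 0) (hc : ∀ i, i < 2 → 0 < c i) :
    ∃ (d : Fin 3 → ℝ) (L : Fin 3 → ((ℕ → ℝ) →ₗ[ℝ] ℝ)),
      (∀ x, Qc 3 c b x = ∑ i, d i * (L i x)^2) ∧ (∀ i, d i ≠ 0) ∧
      (∀ x, (∀ i, L i x = 0) → ∀ j, j < 3 → x j = 0) ∧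
      (Finset.univ.filter fun i => 0 < d i).card = tgt 3 b ∧
      (Finset.univ.filter fun i => d i < 0).card = 3 - tgt 3 b := by
  have hc0 := hc 0 (by omega)
  have hc1 := hc 1 (by omega)
  set u : (ℕ → ℝ) →ₗ[ℝ] ℝ := c 0 • LinearMap.proj 1 + b • LinearMap.proj 2 with hu
  set t : (ℕ → ℝ) →ₗ[ℝ] ℝ := LinearMap.proj 0 + (c 1 / c 0) • LinearMap.proj 2 with ht
  have hd2ne : -(c 1 * b / c 0) ≠ 0 :=
    neg_ne_zero.mpr (div_ne_zero (mul_ne_zero hc1.ne' hb) hc0.ne')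
  refine ⟨![1/4, -(1/4), -(c 1 * b / c 0)], ![u + t, u - t, LinearMap.proj 2],
    ?_, ?_, ?_, ?_, ?_⟩
  · intro x
    simp only [Qc, show (3:ℕ)-1 = 2 from rfl, Finset.sum_range_succ, Finset.sum_range_zero,
      Fin.sum_univ_three, Matrix.cons_val_zero, Matrix.cons_val_one, Matrix.head_cons,
      Matrix.cons_val_two, Matrix.tail_cons, LinearMap.add_apply, LinearMap.sub_apply,
      LinearMap.smul_apply, LinearMap.proj_apply, smul_eq_mul, hu, ht]
    field_simp
    ring
  · intro i
    fin_cases i <;>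
      simp only [Matrix.cons_val_zero, Matrix.cons_val_one, Matrix.head_cons,
        Matrix.cons_val_two, Matrix.tail_cons] <;>
      [norm_num; norm_num; exact hd2ne]
  · intro x hx j hj
    have h0 := hx 0
    have h1 := hx 1
    have h2 := hx 2
    simp only [Matrix.cons_val_zero, Matrix.cons_val_one, Matrix.head_cons,
      Matrix.cons_val_two, Matrix.tail_cons, LinearMap.add_apply, LinearMap.sub_apply,
      LinearMap.smul_apply, LinearMap.proj_apply, smul_eq_mul, hu, ht] at h0 h1 h2
    rw [h2] at h0 h1
    have hx1 : x 1 = 0 := by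
      have : c 0 * x 1 = 0 := by linarith
      rcases mul_eq_zero.mp this with h|h
      · exact absurd h hc0.ne'
      · exact h
    have hx0 : x 0 = 0 := by
      rw [hx1] at h0 h1
      have : x 0 = 0 := by linarith
      exact this
    interval_cases j <;> assumption
  · rcases lt_or_gt_of_ne hb with hneg|hpos
    · have hd2 : 0 < -(c 1 * b / c 0) := by
        rw [show -(c 1 * b / c 0) = c 1 * (-b) / c 0 from by ring]
        exact div_pos (mul_pos hc1 (by linarith)) hc0
      rw [Finset.card_filter, Fin.sum_univ_three]
      rw [show tgt 3 b = 2 from by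
        unfold tgt
        rw [if_neg (by omega), if_neg (fun h => absurd (h.mp (by omega)) (by linarith))]]
      simp only [Matrix.cons_val_zero, Matrix.cons_val_one, Matrix.head_cons,
        Matrix.cons_val_two, Matrix.tail_cons]
      simp only [if_pos (by norm_num : (0:ℝ) < 1/4), if_neg (by norm_num : ¬ (0:ℝ) < -(1/4)), if_pos hd2]
      norm_num
    · have hd2 : ¬ (0 < -(c 1 * b / c 0)) := by
        have : 0 < c 1 * b / c 0 := div_pos (mul_pos hc1 hpos) hc0
        linarith
      rw [Finset.card_filter, Fin.sum_univ_three]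
      rw [show tgt 3 b = 1 from by
        unfold tgt
        rw [if_neg (by omega), if_pos (iff_of_true (by omega) hpos)]]
      simp only [Matrix.cons_val_zero, Matrix.cons_val_one, Matrix.head_cons,
        Matrix.cons_val_two, Matrix.tail_cons]
      simp only [if_pos (by norm_num : (0:ℝ) < 1/4), if_neg (by norm_num : ¬ (0:ℝ) < -(1/4)), if_neg hd2]
      norm_num
  · rcases lt_or_gt_of_ne hb with hneg|hpos
    · have hd2 : ¬ (-(c 1 * b / c 0) < 0) := by
        have : 0 < -(c 1 * b / c 0) := by
          rw [show -(c 1 * b / c 0) = c 1 * (-b) / c 0 from by ring]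
          exact div_pos (mul_pos hc1 (by linarith)) hc0
        linarith
      rw [Finset.card_filter, Fin.sum_univ_three]
      rw [show tgt 3 b = 2 from by
        unfold tgt
        rw [if_neg (by omega), if_neg (fun h => absurd (h.mp (by omega)) (by linarith))]]
      simp only [Matrix.cons_val_zero, Matrix.cons_val_one, Matrix.head_cons,
        Matrix.cons_val_two, Matrix.tail_cons]
      simp only [if_neg (by norm_num : ¬ (1:ℝ)/4 < 0), if_pos (by norm_num : -(1/4:ℝ) < 0), if_neg hd2]
      norm_num
    · have hd2 : -(c 1 * b / c 0) < 0 := by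
        have : 0 < c 1 * b / c 0 := div_pos (mul_pos hc1 hpos) hc0
        linarith
      rw [Finset.card_filter, Fin.sum_univ_three]
      rw [show tgt 3 b = 1 from by
        unfold tgt
        rw [if_neg (by omega), if_pos (iff_of_true (by omega) hpos)]]
      simp only [Matrix.cons_val_zero, Matrix.cons_val_one, Matrix.head_cons,
        Matrix.cons_val_two, Matrix.tail_cons]
      simp only [if_neg (by norm_num : ¬ (1:ℝ)/4 < 0), if_pos (by norm_num : -(1/4:ℝ) < 0), if_pos hd2]
      norm_num

lemma cycle_diag_four (c : ℕ → ℝ) (b : ℝ) (hbneg : b < 0) (hc : ∀ i, i < 3 → 0 < c i) :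
    ∃ (d : Fin 4 → ℝ) (L : Fin 4 → ((ℕ → ℝ) →ₗ[ℝ] ℝ)),
      (∀ x, Qc 4 c b x = ∑ i, d i * (L i x)^2) ∧ (∀ i, d i ≠ 0) ∧
      (∀ x, (∀ i, L i x = 0) → ∀ j, j < 4 → x j = 0) ∧
      (Finset.univ.filter fun i => 0 < d i).card = tgt 4 b ∧
      (Finset.univ.filter fun i => d i < 0).card = 4 - tgt 4 b := by
  have hc0 := hc 0 (by omega)
  have hc1 := hc 1 (by omega)
  have hc2 := hc 2 (by omega)
  set u : (ℕ → ℝ) →ₗ[ℝ] ℝ := c 0 • LinearMap.proj 1 + b • LinearMap.proj 3 with hu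
  set v : (ℕ → ℝ) →ₗ[ℝ] ℝ := c 1 • LinearMap.proj 1 + c 2 • LinearMap.proj 3 with hv
  refine ⟨![1/4, -(1/4), 1/4, -(1/4)],
    ![LinearMap.proj 0 + u, LinearMap.proj 0 - u, LinearMap.proj 2 + v, LinearMap.proj 2 - v],
    ?_, ?_, ?_, ?_, ?_⟩
  · intro x
    simp only [Qc, show (4:ℕ)-1 = 3 from rfl, Finset.sum_range_succ, Finset.sum_range_zero,
      Fin.sum_univ_four, Matrix.cons_val_zero, Matrix.cons_val_one, Matrix.head_cons,
      Matrix.cons_val_two, Matrix.tail_cons, Matrix.cons_val_three, LinearMap.add_apply,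
      LinearMap.sub_apply, LinearMap.smul_apply, LinearMap.proj_apply, smul_eq_mul, hu, hv]
    ring
  · intro i
    fin_cases i <;> norm_num
  · intro x hx j hj
    have h0 := hx 0
    have h1 := hx 1
    have h2 := hx 2
    have h3 := hx 3
    simp only [Matrix.cons_val_zero, Matrix.cons_val_one, Matrix.head_cons,
      Matrix.cons_val_two, Matrix.tail_cons, Matrix.cons_val_three, LinearMap.add_apply,
      LinearMap.sub_apply, LinearMap.smul_apply, LinearMap.proj_apply, smul_eq_mul,
      hu, hv] at h0 h1 h2 h3
    have hx0 : x 0 = 0 := by linarith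
    have hx2 : x 2 = 0 := by linarith
    have e1 : c 0 * x 1 + b * x 3 = 0 := by linarith
    have e2 : c 1 * x 1 + c 2 * x 3 = 0 := by linarith
    have hdet : 0 < c 0 * c 2 - c 1 * b := by nlinarith
    have hx3 : x 3 = 0 := by
      have h5 : (c 0 * c 2 - c 1 * b) * x 3 = 0 := by linear_combination c 0 * e2 - c 1 * e1
      rcases mul_eq_zero.mp h5 with h|h
      · exact absurd h (ne_of_gt hdet)
      · exact h
    have hx1 : x 1 = 0 := by
      rw [hx3] at e1
      have : c 0 * x 1 = 0 := by linarith
      rcases mul_eq_zero.mp this with h|h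
      · exact absurd h hc0.ne'
      · exact h
    interval_cases j <;> assumption
  · rw [Finset.card_filter, Fin.sum_univ_four, show tgt 4 b = 2 from by unfold tgt; norm_num]
    simp
    norm_num
  · rw [Finset.card_filter, Fin.sum_univ_four, show tgt 4 b = 2 from by unfold tgt; norm_num]
    simp
    norm_num

lemma cycle_diag : ∀ m, 3 ≤ m → ∀ (c : ℕ → ℝ) (b : ℝ), b ≠ 0 →
    (∀ i, i < m - 1 → 0 < c i) → (m % 2 = 0 → (0 < b ↔ m % 4 = 2)) →
    ∃ (d : Fin m → ℝ) (L : Fin m → ((ℕ → ℝ) →ₗ[ℝ] ℝ)),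
      (∀ x, Qc m c b x = ∑ i, d i * (L i x)^2) ∧ (∀ i, d i ≠ 0) ∧
      (∀ x, (∀ i, L i x = 0) → ∀ j, j < m → x j = 0) ∧
      (Finset.univ.filter fun i => 0 < d i).card = tgt m b ∧
      (Finset.univ.filter fun i => d i < 0).card = m - tgt m b := by
  intro m
  induction m using Nat.strong_induction_on with
  | _ m IH =>
  intro hm c b hb hc hparity
  by_cases h3 : m = 3
  · subst h3
    exact cycle_diag_three c b hb (fun i hi => hc i (by omega))
  by_cases h4 : m = 4
  · subst h4
    have hbneg : b < 0 := by
      have := hparity (by omega)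
      rcases lt_or_gt_of_ne hb with h|h
      · exact h
      · have := (this.mp h); omega
    exact cycle_diag_four c b hbneg (fun i hi => hc i (by omega))
  obtain ⟨m', rfl⟩ : ∃ m', m = m' + 2 := ⟨m - 2, by omega⟩
  have hm' : 3 ≤ m' := by omega
  have hc0 := hc 0 (by omega)
  have hc1 := hc 1 (by omega)
  set b' : ℝ := -(c 1 * b / c 0) with hb'def
  have hkey : b' * c 0 = -(c 1 * b) := by
    rw [hb'def]; field_simp
  have hsign : 0 < b' ↔ b < 0 := by
    constructor
    · intro h
      nlinarith [mul_pos h hc0]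
    · intro h
      have h5 : 0 < -(c 1 * b) := by nlinarith
      nlinarith
  have hb'ne : b' ≠ 0 := by
    intro h
    apply mul_ne_zero hc1.ne' hb
    rw [h, zero_mul] at hkey
    linarith
  have hpar' : m' % 2 = 0 → (0 < b' ↔ m' % 4 = 2) := by
    intro he
    have hp := hparity (by omega)
    rw [hsign]
    constructor
    · intro h
      by_contra hne
      have h0 : (m' + 2) % 4 = 2 := by omega
      have := hp.mpr h0
      linarith
    · intro h
      rcases lt_or_gt_of_ne hb with h'|h'
      · exact h'
      · have := hp.mp h'
        omega
  have hc' : ∀ i, i < m' - 1 → 0 < c (i+2) := fun i hi => hc (i+2) (by omega)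
  obtain ⟨d', L', hQ', hd', hinj', hcp', hcn'⟩ := IH m' (by omega) hm' (fun i => c (i+2)) b' hb'ne hc' hpar'
  set s : (ℕ → ℝ) →ₗ[ℝ] ℝ := c 0 • LinearMap.proj 1 + b • LinearMap.proj (m'+1) with hs
  set t : (ℕ → ℝ) →ₗ[ℝ] ℝ := LinearMap.proj 0 + (c 1 / c 0) • LinearMap.proj 2 with ht
  set sh : (ℕ → ℝ) →ₗ[ℝ] (ℕ → ℝ) := LinearMap.funLeft ℝ ℝ (fun j => j + 2) with hsh
  refine ⟨Fin.cases (1/4) (Fin.cases (-(1/4)) d'),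
    Fin.cases (s+t) (Fin.cases (s-t) (fun k => (L' k).comp sh)), ?_, ?_, ?_, ?_, ?_⟩
  · intro x
    have hshx : ∀ y : ℕ → ℝ, (LinearMap.funLeft ℝ ℝ (fun j => j + 2)) y
        = (fun j => y (j+2)) := fun y => rfl
    rw [Qc_step m' hm' c b hc0.ne' x, Fin.sum_univ_succ, Fin.sum_univ_succ]
    simp only [Fin.cases_zero, Fin.cases_succ, LinearMap.add_apply, LinearMap.sub_apply,
      LinearMap.smul_apply, LinearMap.proj_apply, LinearMap.comp_apply,
      smul_eq_mul, hs, ht, hsh, hshx]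
    rw [hQ' (fun j => x (j+2))]
    ring
  · intro i
    refine Fin.cases ?_ (fun j => ?_) i
    · simp only [Fin.cases_zero]; norm_num
    refine Fin.cases ?_ (fun k => ?_) j
    · simp only [Fin.cases_succ, Fin.cases_zero]; norm_num
    · simp only [Fin.cases_succ]
      exact hd' k
  · intro x hx j hj
    have hrest : ∀ j, j < m' → x (j+2) = 0 := by
      have := hinj' (fun j => x (j+2)) ?_
      · intro j hj
        exact this j hj
      · intro k
        have := hx k.succ.succ
        simp only [Fin.cases_succ, LinearMap.comp_apply, hsh] at this
        exact this
    have h0 := hx 0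
    have h1 := hx (Fin.succ 0)
    simp only [Fin.cases_zero, Fin.cases_succ, LinearMap.add_apply, LinearMap.sub_apply,
      LinearMap.smul_apply, LinearMap.proj_apply, smul_eq_mul, hs, ht] at h0 h1
    have hm1 : x (m'+1) = 0 := by
      have := hrest (m'-1) (by omega)
      rwa [show m'-1+2 = m'+1 from by omega] at this
    have hx2 : x 2 = 0 := by
      have := hrest 0 (by omega)
      simpa using this
    rw [hm1, hx2] at h0 h1
    have hx1 : x 1 = 0 := by
      have : c 0 * x 1 = 0 := by linarith
      rcases mul_eq_zero.mp this with h|h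
      · exact absurd h hc0.ne'
      · exact h
    have hx0 : x 0 = 0 := by linarith
    rcases j with _|j
    · exact hx0
    rcases j with _|j
    · exact hx1
    · exact hrest j (by omega)
  · have hle := tgt_le m' b'
    rw [Finset.card_filter, Fin.sum_univ_succ, Fin.sum_univ_succ]
    show (if (0:ℝ) < 1/4 then 1 else 0) + ((if (0:ℝ) < -(1/4) then 1 else 0) + ∑ i : Fin m', if 0 < d' i then 1 else 0) = _
    rw [if_pos (by norm_num : (0:ℝ) < 1/4), if_neg (by norm_num : ¬ ((0:ℝ) < -(1/4))),
      ← Finset.card_filter, hcp', tgt_step m' hm' b b' hb hsign]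
    omega
  · have hle := tgt_le m' b'
    rw [Finset.card_filter, Fin.sum_univ_succ, Fin.sum_univ_succ]
    show (if (1:ℝ)/4 < 0 then 1 else 0) + ((if -(1/4:ℝ) < 0 then 1 else 0) + ∑ i : Fin m', if d' i < 0 then 1 else 0) = _
    rw [if_neg (by norm_num : ¬ ((1:ℝ)/4 < 0)), if_pos (by norm_num : ((-(1/4) : ℝ)) < 0),
      ← Finset.card_filter, hcn', tgt_step m' hm' b b' hb hsign]
    omega


section FinLemma

lemma fin_succ_succ_ne {n : ℕ} (hn : 3 ≤ n) [NeZero n] (i : Fin n) : i + 1 + 1 ≠ i := by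
  intro h
  have hv := congrArg Fin.val h
  rw [Fin.val_add, Fin.val_add, Fin.val_one'] at hv
  have hlt := i.isLt
  have h1n : 1 % n = 1 := Nat.mod_eq_of_lt (by omega)
  rw [h1n] at hv
  by_cases c1 : i.val + 1 = n
  · rw [c1, Nat.mod_self, Nat.mod_eq_of_lt (show 0 + 1 < n by omega)] at hv
    omega
  · rw [Nat.mod_eq_of_lt (show i.val + 1 < n by omega)] at hv
    by_cases c2 : i.val + 1 + 1 = n
    · rw [c2, Nat.mod_self] at hv
      omega
    · rw [Nat.mod_eq_of_lt (show i.val + 1 + 1 < n by omega)] at hv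
      omega

end FinLemma

end Aux

open Matrix Finset in
/-- Inertia of a weighted cycle of order `n ≢ 0 (mod 4)`, independent of the
positive weights; in all three cases the weighted adjacency matrix is invertible. -/
theorem stmt9 {n : ℕ} [NeZero n] (hn : 3 ≤ n)
    (a : Fin n → ℝ) (ha : ∀ i, 0 < a i)
    (A : Matrix (Fin n) (Fin n) ℝ)
    (hA : ∀ i j, A i j = if j = i + 1 then a i else if i = j + 1 then a j else 0) :
    (n % 4 = 1 → iPos A = (n + 1) / 2 ∧ iNeg A = (n - 1) / 2) ∧
    (n % 4 = 2 → iPos A = n / 2 ∧ iNeg A = n / 2) ∧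
    (n % 4 = 3 → iPos A = (n - 1) / 2 ∧ iNeg A = (n + 1) / 2) ∧
    (n % 4 ≠ 0 → A.det ≠ 0) := by
  classical
  have npos : 0 < n := by omega
  have herm : A.IsHermitian := by
    rw [Matrix.IsHermitian]
    ext i j
    rw [Matrix.conjTranspose_apply, hA, hA, star_trivial]
    split_ifs with h2 h1
    · exfalso; rw [h1] at h2; exact fin_succ_succ_ne hn i h2.symm
    all_goals rfl
  have hsplit : ∀ i j, A i j = (if j = i + 1 then a i else 0) + (if i = j + 1 then a j else 0) := by
    intro i j
    rw [hA]
    split_ifs with h1 h2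
    · exfalso; rw [h1] at h2; exact fin_succ_succ_ne hn i h2.symm
    all_goals ring
  have hquad : ∀ x : Fin n → ℝ, x ⬝ᵥ A *ᵥ x = 2 * ∑ i : Fin n, a i * x i * x (i+1) := by
    intro x
    have step1 : x ⬝ᵥ A *ᵥ x
        = (∑ i : Fin n, ∑ j : Fin n, (if j = i+1 then a i * x i * x j else 0))
        + (∑ i : Fin n, ∑ j : Fin n, (if i = j+1 then a j * x i * x j else 0)) := by
      rw [← Finset.sum_add_distrib]
      simp only [← Finset.sum_add_distrib]
      simp only [dotProduct, Matrix.mulVec, Finset.mul_sum]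
      refine Finset.sum_congr rfl fun i _ => Finset.sum_congr rfl fun j _ => ?_
      rw [hsplit i j]
      split_ifs <;> ring
    rw [step1]
    have e1 : ∀ i : Fin n, (∑ j : Fin n, if j = i+1 then a i * x i * x j else 0)
        = a i * x i * x (i+1) := by
      intro i
      rw [Finset.sum_ite_eq' Finset.univ (i+1) (fun j => a i * x i * x j)]
      simp
    have e3 : (∑ i : Fin n, ∑ j : Fin n, (if i = j+1 then a j * x i * x j else 0))
        = ∑ j : Fin n, ∑ i : Fin n, (if i = j+1 then a j * x i * x j else 0) :=
      Finset.sum_comm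
    have e2 : ∀ j : Fin n, (∑ i : Fin n, if i = j+1 then a j * x i * x j else 0)
        = a j * x (j+1) * x j := by
      intro j
      rw [Finset.sum_ite_eq' Finset.univ (j+1) (fun i => a j * x i * x j)]
      simp
    have e4 : (∑ j : Fin n, a j * x (j+1) * x j) = ∑ j : Fin n, a j * x j * x (j+1) :=
      Finset.sum_congr rfl fun j _ => by ring
    rw [e3, Finset.sum_congr rfl (fun i _ => e1 i), Finset.sum_congr rfl (fun j _ => e2 j), e4]
    ring
  set g : ℕ → Fin n := fun j => if h : j < n then ⟨j, h⟩ else ⟨0, npos⟩ with hg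
  set E : (Fin n → ℝ) →ₗ[ℝ] (ℕ → ℝ) := LinearMap.funLeft ℝ ℝ g with hE
  set c : ℕ → ℝ := fun j => if h : j < n then a ⟨j, h⟩ else 1 with hcdef
  set bb : ℝ := c (n-1) with hbbdef
  have hEx : ∀ (x : Fin n → ℝ) (j : ℕ) (hj : j < n), E x j = x ⟨j, hj⟩ := by
    intro x j hj
    rw [hE]
    simp only [LinearMap.funLeft_apply, hg]
    rw [dif_pos hj]
  have hbb : 0 < bb := by
    rw [hbbdef]
    simp only [hcdef]
    rw [dif_pos (show n-1 < n by omega)]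
    exact ha _
  clear_value g E c bb
  have hbridge : ∀ x : Fin n → ℝ, (∑ i : Fin n, a i * x i * x (i+1)) = Qc n c bb (E x) := by
    intro x
    have hfin : ∀ i : Fin n, a i * x i * x (i + 1)
        = c i.val * E x i.val * E x ((i.val + 1) % n) := by
      intro i
      have hv : ((i + 1 : Fin n)).val = (i.val + 1) % n := by
        rw [Fin.val_add, Fin.val_one']
        congr 2
        exact Nat.mod_eq_of_lt (by omega)
      have h1 : (i.val + 1) % n < n := Nat.mod_lt _ npos
      rw [hEx x i.val i.isLt, hEx x _ h1]
      have hc1 : c i.val = a i := by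
        simp only [hcdef]
        rw [dif_pos i.isLt]
      rw [hc1]
      congr 2
      exact Fin.ext hv
    rw [Finset.sum_congr rfl (fun i _ => hfin i),
      Fin.sum_univ_eq_sum_range (fun j => c j * E x j * E x ((j + 1) % n)) n]
    obtain ⟨k, hk⟩ : ∃ k, n = k + 1 := ⟨n - 1, by omega⟩
    generalize E x = y
    rw [hk, Finset.sum_range_succ]
    unfold Qc
    rw [Nat.add_sub_cancel]
    congr 1
    · refine Finset.sum_congr rfl fun j hj => ?_
      rw [Finset.mem_range] at hj
      rw [Nat.mod_eq_of_lt (by omega)]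
    · rw [Nat.mod_self]
      have hbk : bb = c k := by rw [hbbdef, hk, Nat.add_sub_cancel]
      rw [hbk]; ring
  have hmain : n % 4 ≠ 0 → iPos A = tgt n bb ∧ iNeg A = n - tgt n bb ∧ A.det ≠ 0 := by
    intro h40
    have hcc : ∀ i, i < n - 1 → 0 < c i := by
      intro i hi
      simp only [hcdef]
      rw [dif_pos (show i < n by omega)]
      exact ha _
    have hpar : n % 2 = 0 → (0 < bb ↔ n % 4 = 2) := fun he => iff_of_true hbb (by omega)
    obtain ⟨d, L, hQ, hd, hinj, hcp, hcn⟩ := cycle_diag n hn c bb hbb.ne' hcc hpar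
    set d2 : Fin n → ℝ := fun i => 2 * d i with hd2def
    set L2 : Fin n → ((Fin n → ℝ) →ₗ[ℝ] ℝ) := fun i => (L i).comp E with hL2def
    have hQ2 : ∀ x, x ⬝ᵥ A *ᵥ x = ∑ i, d2 i * (L2 i x)^2 := by
      intro x
      rw [hquad x, hbridge x, hQ (E x), Finset.mul_sum]
      refine Finset.sum_congr rfl fun i _ => ?_
      simp only [hd2def, hL2def, LinearMap.comp_apply]
      ring
    have hd2 : ∀ i, d2 i ≠ 0 := by
      intro i
      simp only [hd2def]
      exact mul_ne_zero two_ne_zero (hd i)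
    have hinj2 : ∀ x, (∀ i, L2 i x = 0) → x = 0 := by
      intro x hx
      funext i
      have := hinj (E x)
        (fun k => by have := hx k; simpa only [hL2def, LinearMap.comp_apply] using this)
        i.val i.isLt
      rw [hEx x i.val i.isLt] at this
      simpa using this
    obtain ⟨e1, e2, e3⟩ := inertia_of_diag A herm d2 L2 hQ2 hd2 hinj2
    have hfp : (Finset.univ.filter fun i => 0 < d2 i) = (Finset.univ.filter fun i => 0 < d i) := by
      refine Finset.filter_congr fun i _ => ?_
      simp only [hd2def, eq_iff_iff]
      constructor <;> intro h <;> linarith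
    have hfn : (Finset.univ.filter fun i => d2 i < 0) = (Finset.univ.filter fun i => d i < 0) := by
      refine Finset.filter_congr fun i _ => ?_
      simp only [hd2def, eq_iff_iff]
      constructor <;> intro h <;> linarith
    refine ⟨?_, ?_, ?_⟩
    · unfold iPos
      rw [dif_pos herm, e1, hfp, hcp]
    · unfold iNeg
      rw [dif_pos herm, e2, hfn, hcn]
    · rw [herm.det_eq_prod_eigenvalues]
      refine Finset.prod_ne_zero_iff.mpr fun i _ => ?_
      simpa using e3 i
  refine ⟨?_, ?_, ?_, fun h40 => (hmain h40).2.2⟩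
  · intro h1
    obtain ⟨e1, e2, _⟩ := hmain (by omega)
    have ht : tgt n bb = (n+1)/2 := by
      unfold tgt
      rw [if_neg (by omega), if_neg (fun h => by have := h.mpr hbb; omega)]
    refine ⟨by rw [e1, ht], by rw [e2, ht]; omega⟩
  · intro h2
    obtain ⟨e1, e2, _⟩ := hmain (by omega)
    have ht : tgt n bb = n/2 := by
      unfold tgt
      rw [if_pos (by omega)]
    refine ⟨by rw [e1, ht], by rw [e2, ht]; omega⟩
  · intro h3
    obtain ⟨e1, e2, _⟩ := hmain (by omega)
    have ht : tgt n bb = (n-1)/2 := by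
      unfold tgt
      rw [if_neg (by omega), if_pos (iff_of_true (by omega) hbb)]
    refine ⟨by rw [e1, ht], by rw [e2, ht]; omega⟩
end

section
/- Let T be a tree and v a mismatched vertex of T. Then every neighbor u of v is matched in T, and moreover u is matched in the component of T − v containing u. -/
attribute [local instance] Classical.propDecidable

set_option linter.unusedSectionVars false

namespace Stmt12Aux

/-- All edges of `M` have both endpoints in `A`. -/
def InA {V : Type*} (A : Set V) (M : Finset (Sym2 V)) : Prop :=
  ∀ e ∈ M, ∀ x ∈ e, x ∈ A

/-- The maximum size of a matching of `T` all of whose edges lie inside `A`. -/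
noncomputable def nuA {V : Type*} (T : SimpleGraph V) (A : Set V) : ℕ :=
  sSup {n | ∃ M : Finset (Sym2 V), (IsMatchingSet T M ∧ InA A M) ∧ M.card = n}

variable {V : Type*} [Fintype V] [DecidableEq V]

lemma isMatchingSet_empty (G : SimpleGraph V) : IsMatchingSet G (∅ : Finset (Sym2 V)) := by
  constructor
  · simp
  · intro e he; simp at he

lemma bddAbove_matchSet (P : Finset (Sym2 V) → Prop) :
    BddAbove {n | ∃ M : Finset (Sym2 V), P M ∧ M.card = n} := by
  refine ⟨Fintype.card (Sym2 V), ?_⟩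
  rintro n ⟨M, -, rfl⟩
  exact Finset.card_le_univ M

lemma exists_max_matching (G : SimpleGraph V) :
    ∃ M : Finset (Sym2 V), IsMatchingSet G M ∧ M.card = matchNum G := by
  have h := Nat.sSup_mem (s := {n | ∃ M : Finset (Sym2 V), IsMatchingSet G M ∧ M.card = n})
    ⟨0, ∅, isMatchingSet_empty G, by simp⟩ (bddAbove_matchSet _)
  obtain ⟨M, hM, hc⟩ := h
  exact ⟨M, hM, hc⟩

lemma card_le_matchNum {G : SimpleGraph V} {M : Finset (Sym2 V)} (h : IsMatchingSet G M) :
    M.card ≤ matchNum G :=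
  le_csSup (bddAbove_matchSet _) ⟨M, h, rfl⟩

lemma exists_max_matchingA (T : SimpleGraph V) (A : Set V) :
    ∃ M : Finset (Sym2 V), IsMatchingSet T M ∧ InA A M ∧ M.card = nuA T A := by
  have h := Nat.sSup_mem
    (s := {n | ∃ M : Finset (Sym2 V), (IsMatchingSet T M ∧ InA A M) ∧ M.card = n})
    ⟨0, ∅, ⟨isMatchingSet_empty T, (by intro e he; simp at he)⟩, by simp⟩
    (bddAbove_matchSet _)
  obtain ⟨M, ⟨hM, hA⟩, hc⟩ := h
  exact ⟨M, hM, hA, hc⟩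

lemma card_le_nuA {T : SimpleGraph V} {A : Set V} {M : Finset (Sym2 V)}
    (h : IsMatchingSet T M) (hA : InA A M) : M.card ≤ nuA T A :=
  le_csSup (bddAbove_matchSet _) ⟨M, ⟨h, hA⟩, rfl⟩

lemma isMatchingSet_subset {G : SimpleGraph V} {M N : Finset (Sym2 V)}
    (hNM : N ⊆ M) (h : IsMatchingSet G M) : IsMatchingSet G N := by
  refine ⟨fun e he => h.1 (hNM he), fun e he f hf hne x hxe => h.2 e (hNM he) f (hNM hf) hne x hxe⟩

lemma isMatchingSet_union {G : SimpleGraph V} {M N : Finset (Sym2 V)}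
    (hM : IsMatchingSet G M) (hN : IsMatchingSet G N)
    (hdisj : ∀ e ∈ M, ∀ x ∈ e, ∀ f ∈ N, x ∉ f) :
    IsMatchingSet G (M ∪ N) ∧ (M ∪ N).card = M.card + N.card := by
  have hMN : Disjoint M N := by
    rw [Finset.disjoint_left]
    intro e heM heN
    exact hdisj e heM e.out.1 (Sym2.out_fst_mem e) e heN (Sym2.out_fst_mem e)
  constructor
  · constructor
    · intro e he
      rcases Finset.mem_union.1 he with h | h
      · exact hM.1 h
      · exact hN.1 h
    · intro e he f hf hne x hxe hxf
      rcases Finset.mem_union.1 he with he' | he' <;> rcases Finset.mem_union.1 hf with hf' | hf'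
      · exact hM.2 e he' f hf' hne x hxe hxf
      · exact hdisj e he' x hxe f hf' hxf
      · exact hdisj f hf' x hxf e he' hxe
      · exact hN.2 e he' f hf' hne x hxe hxf
  · exact Finset.card_union_of_disjoint hMN

lemma isMatchingSet_single {G : SimpleGraph V} {a b : V} (h : G.Adj a b) :
    IsMatchingSet G ({s(a, b)} : Finset (Sym2 V)) := by
  constructor
  · intro e he
    simp only [Finset.coe_singleton, Set.mem_singleton_iff] at he
    subst he
    exact h
  · intro e he f hf hne
    simp only [Finset.mem_singleton] at he hf
    subst he; subst hf
    exact absurd rfl hne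

lemma mem_edge {G : SimpleGraph V} {e : Sym2 V} {x : V} (he : e ∈ G.edgeSet) (hx : x ∈ e) :
    ∃ y, G.Adj x y ∧ e = s(x, y) := by
  induction e using Sym2.inductionOn with
  | hf a b =>
    rw [Sym2.mem_iff] at hx
    rcases hx with rfl | rfl
    · exact ⟨b, G.mem_edgeSet.1 he, rfl⟩
    · exact ⟨a, (G.mem_edgeSet.1 he).symm, Sym2.eq_swap⟩

/-- Key lemma: if some maximum matching of `T` misses `v`, `u` is a neighbour of `v`
belonging to the "piece" `A` (with `v ∉ A`, and every edge avoiding `v` is entirely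
inside or entirely outside `A`), then every maximum matching-within-`A` covers `u`. -/
lemma factB (T : SimpleGraph V) (v u : V) (hadj : T.Adj u v) (A : Set V)
    (huA : u ∈ A) (hvA : v ∉ A)
    (hedge : ∀ e ∈ T.edgeSet, v ∉ e → ((∀ x ∈ e, x ∈ A) ∨ (∀ x ∈ e, x ∉ A)))
    (hv : ¬ Matched T v) :
    ∀ K : Finset (Sym2 V), IsMatchingSet T K → InA A K → K.card = nuA T A →
      ∃ e ∈ K, u ∈ e := by
  intro K hK hKA hKc
  by_contra hu
  push_neg at hu
  obtain ⟨M0, hM0, hM0c, hM0v⟩ :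
      ∃ M : Finset (Sym2 V), IsMatchingSet T M ∧ M.card = matchNum T ∧ ∀ e ∈ M, v ∉ e := by
    unfold Matched at hv
    push_neg at hv
    obtain ⟨M, h1, h2, h3⟩ := hv
    exact ⟨M, h1, h2, h3⟩
  classical
  set Min := M0.filter (fun e => ∀ x ∈ e, x ∈ A) with hMin
  set Mout := M0.filter (fun e => ¬ ∀ x ∈ e, x ∈ A) with hMout
  have houtA : ∀ e ∈ Mout, ∀ x ∈ e, x ∉ A := by
    intro e he
    have he' := Finset.mem_filter.1 he
    rcases hedge e (hM0.1 he'.1) (hM0v e he'.1) with h | h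
    · exact absurd h he'.2
    · exact h
  have hMinM : IsMatchingSet T Min := isMatchingSet_subset (Finset.filter_subset _ _) hM0
  have hMinA : InA A Min := fun e he => (Finset.mem_filter.1 he).2
  have hMinle : Min.card ≤ nuA T A := card_le_nuA hMinM hMinA
  have hMoutM : IsMatchingSet T Mout := isMatchingSet_subset (Finset.filter_subset _ _) hM0
  -- build M1 := Mout ∪ K ∪ {s(u,v)}
  have h1 := isMatchingSet_union hMoutM hK
    (fun e he x hx f hf hxf => houtA e he x hx (hKA f hf x hxf))
  have hsingle : IsMatchingSet T ({s(u, v)} : Finset (Sym2 V)) := isMatchingSet_single hadj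
  have h2 := isMatchingSet_union h1.1 hsingle ?_
  · have hcard : (Mout ∪ K ∪ {s(u, v)}).card = Mout.card + K.card + 1 := by
      rw [h2.2, h1.2]; simp
    have hle := card_le_matchNum h2.1
    rw [hcard, hKc] at hle
    have hsplitc : Min.card + Mout.card = M0.card := by
      rw [hMin, hMout]
      exact Finset.card_filter_add_card_filter_not _
    omega
  · intro e he x hx f hf hxf
    rw [Finset.mem_singleton] at hf
    subst hf
    rw [Sym2.mem_iff] at hxf
    rcases Finset.mem_union.1 he with he' | he'
    · rcases hxf with rfl | rfl
      · exact houtA e he' x hx huA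
      · exact hM0v e (Finset.mem_filter.1 he').1 hx
    · rcases hxf with rfl | rfl
      · exact hu e he' hx
      · exact hvA (hKA e he' x hx)

lemma part1 (T : SimpleGraph V) (v u : V) (hadj : T.Adj u v) (A : Set V)
    (huA : u ∈ A) (hvA : v ∉ A)
    (hedge : ∀ e ∈ T.edgeSet, v ∉ e → ((∀ x ∈ e, x ∈ A) ∨ (∀ x ∈ e, x ∉ A)))
    (hP4 : ∀ w, T.Adj v w → w ∈ A → w = u)
    (hB : ∀ K : Finset (Sym2 V), IsMatchingSet T K → InA A K → K.card = nuA T A →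
      ∃ e ∈ K, u ∈ e) :
    Matched T u := by
  intro M hM hMc
  by_contra hu
  push_neg at hu
  -- v must be covered by M
  by_cases hvcov : ∃ e ∈ M, v ∈ e
  case neg =>
    push_neg at hvcov
    have hsingle : IsMatchingSet T ({s(u, v)} : Finset (Sym2 V)) := isMatchingSet_single hadj
    have h2 := isMatchingSet_union hM hsingle ?_
    · have hle := card_le_matchNum h2.1
      rw [h2.2] at hle
      simp only [Finset.card_singleton] at hle
      omega
    · intro e he x hx f hf hxf
      rw [Finset.mem_singleton] at hf
      subst hf
      rw [Sym2.mem_iff] at hxf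
      rcases hxf with rfl | rfl
      · exact hu e he hx
      · exact hvcov e he hx
  case pos =>
    obtain ⟨e, heM, hve⟩ := hvcov
    obtain ⟨w, hvw, hew⟩ := mem_edge (hM.1 heM) hve
    have hwu : w ≠ u := by
      rintro rfl
      exact hu e heM (by rw [hew]; simp)
    have hwA : w ∉ A := fun h => hwu (hP4 w hvw h)
    classical
    set M' := M.erase e with hM'def
    have hM'sub : M' ⊆ M := Finset.erase_subset _ _
    have hM' : IsMatchingSet T M' := isMatchingSet_subset hM'sub hM
    have hM'v : ∀ f ∈ M', v ∉ f := by
      intro f hf hvf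
      have hne : e ≠ f := fun h => (Finset.mem_erase.1 hf).1 h.symm
      exact hM.2 e heM f (hM'sub hf) hne v hve hvf
    have hM'w : ∀ f ∈ M', w ∉ f := by
      intro f hf hwf
      have hne : e ≠ f := fun h => (Finset.mem_erase.1 hf).1 h.symm
      exact hM.2 e heM f (hM'sub hf) hne w (by rw [hew]; simp) hwf
    set Kin := M'.filter (fun e => ∀ x ∈ e, x ∈ A) with hKin
    set Kout := M'.filter (fun e => ¬ ∀ x ∈ e, x ∈ A) with hKout
    have houtA : ∀ f ∈ Kout, ∀ x ∈ f, x ∉ A := by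
      intro f hf
      have hf' := Finset.mem_filter.1 hf
      rcases hedge f (hM.1 (hM'sub hf'.1)) (hM'v f hf'.1) with h | h
      · exact absurd h hf'.2
      · exact h
    have hKinM : IsMatchingSet T Kin := isMatchingSet_subset (Finset.filter_subset _ _) hM'
    have hKinA : InA A Kin := fun f hf => (Finset.mem_filter.1 hf).2
    have hKoutM : IsMatchingSet T Kout := isMatchingSet_subset (Finset.filter_subset _ _) hM'
    have hKinlt : Kin.card < nuA T A := by
      rcases lt_or_eq_of_le (card_le_nuA hKinM hKinA) with h | h
      · exact h
      · obtain ⟨f, hf, huf⟩ := hB Kin hKinM hKinA h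
        exact absurd huf (hu f (hM'sub (Finset.filter_subset _ _ hf)))
    obtain ⟨Ks, hKs, hKsA, hKsc⟩ := exists_max_matchingA T A
    -- M'' := Kout ∪ Ks ∪ {s(v,w)}
    have h1 := isMatchingSet_union hKoutM hKs
      (fun f hf x hx g hg hxg => houtA f hf x hx (hKsA g hg x hxg))
    have hsingle : IsMatchingSet T ({s(v, w)} : Finset (Sym2 V)) := isMatchingSet_single hvw
    have h2 := isMatchingSet_union h1.1 hsingle ?_
    · have hcard : (Kout ∪ Ks ∪ {s(v, w)}).card = Kout.card + Ks.card + 1 := by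
        rw [h2.2, h1.2]; simp
      have hle := card_le_matchNum h2.1
      rw [hcard, hKsc] at hle
      have hsplitc : Kin.card + Kout.card = M'.card := by
        rw [hKin, hKout]
        exact Finset.card_filter_add_card_filter_not _
      have hM'c : M'.card + 1 = M.card := by
        rw [hM'def]
        rw [Finset.card_erase_of_mem heM]
        have : 0 < M.card := Finset.card_pos.2 ⟨e, heM⟩
        omega
      omega
    · intro f hf x hx g hg hxg
      rw [Finset.mem_singleton] at hg
      subst hg
      rw [Sym2.mem_iff] at hxg
      rcases Finset.mem_union.1 hf with hf' | hf'
      · rcases hxg with rfl | rfl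
        · exact hM'v f (Finset.filter_subset _ _ hf') hx
        · exact hM'w f (Finset.filter_subset _ _ hf') hx
      · rcases hxg with rfl | rfl
        · exact hvA (hKsA f hf' x hx)
        · exact hwA (hKsA f hf' x hx)

lemma transfer {W : Type*} [Fintype W] [Nonempty W] (H : SimpleGraph W)
    (T : SimpleGraph V) (f : W → V) (hf : Function.Injective f)
    (hAdj : ∀ a b : W, H.Adj a b ↔ T.Adj (f a) (f b))
    (A : Set V) (hA : ∀ x, x ∈ A ↔ x ∈ Set.range f)
    (w : W)
    (hw : ∀ K : Finset (Sym2 V), IsMatchingSet T K → InA A K → K.card = nuA T A →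
      ∃ e ∈ K, f w ∈ e) :
    Matched H w := by
  classical
  have hinj2 : Function.Injective (Sym2.map f) := Sym2.map.injective hf
  -- forward transport
  have fwd : ∀ N : Finset (Sym2 W), IsMatchingSet H N →
      IsMatchingSet T (N.image (Sym2.map f)) ∧ InA A (N.image (Sym2.map f)) ∧
        (N.image (Sym2.map f)).card = N.card := by
    intro N hN
    refine ⟨⟨?_, ?_⟩, ?_, Finset.card_image_of_injective _ hinj2⟩
    · intro e' he'
      simp only [Finset.coe_image, Set.mem_image, Finset.mem_coe] at he'
      obtain ⟨e, he, rfl⟩ := he'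
      have := hN.1 he
      induction e using Sym2.inductionOn with
      | hf a b =>
        rw [Sym2.map_pair_eq, SimpleGraph.mem_edgeSet]
        exact (hAdj a b).1 (H.mem_edgeSet.1 this)
    · intro e' he' g' hg' hne x hxe hxg
      obtain ⟨e, he, rfl⟩ := Finset.mem_image.1 he'
      obtain ⟨g, hg, rfl⟩ := Finset.mem_image.1 hg'
      obtain ⟨a, ha, rfl⟩ := Sym2.mem_map.1 hxe
      obtain ⟨b, hb, hba⟩ := Sym2.mem_map.1 hxg
      have hab : b = a := hf hba
      subst hab
      exact hN.2 e he g hg (fun h => hne (by rw [h])) b ha hb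
    · intro e' he' x hx
      obtain ⟨e, he, rfl⟩ := Finset.mem_image.1 he'
      obtain ⟨a, ha, rfl⟩ := Sym2.mem_map.1 hx
      exact (hA (f a)).2 ⟨a, rfl⟩
  -- backward transport
  have bwd : ∀ M : Finset (Sym2 V), IsMatchingSet T M → InA A M →
      ∃ N : Finset (Sym2 W), IsMatchingSet H N ∧ N.image (Sym2.map f) = M ∧
        N.card = M.card := by
    intro M hM hMA
    set g := Function.invFun f with hgdef
    have hg : ∀ a : W, g (f a) = a := Function.leftInverse_invFun hf
    have hrep : ∀ e ∈ M, ∃ a b : W, e = s(f a, f b) := by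
      intro e he
      induction e using Sym2.inductionOn with
      | hf x y =>
        obtain ⟨a, ha⟩ := (hA x).1 (hMA _ he x (by simp))
        obtain ⟨b, hb⟩ := (hA y).1 (hMA _ he y (by simp))
        exact ⟨a, b, by rw [ha, hb]⟩
    have hfg : ∀ e ∈ M, Sym2.map f (Sym2.map g e) = e := by
      intro e he
      obtain ⟨a, b, rfl⟩ := hrep e he
      simp [Sym2.map_pair_eq, hg]
    refine ⟨M.image (Sym2.map g), ⟨?_, ?_⟩, ?_, ?_⟩
    · intro e' he'
      simp only [Finset.coe_image, Set.mem_image, Finset.mem_coe] at he'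
      obtain ⟨e, he, rfl⟩ := he'
      obtain ⟨a, b, rfl⟩ := hrep e he
      have : T.Adj (f a) (f b) := T.mem_edgeSet.1 (hM.1 he)
      simp only [Sym2.map_pair_eq, hg]
      exact H.mem_edgeSet.2 ((hAdj a b).2 this)
    · intro e' he' g' hg' hne x hxe hxg
      obtain ⟨e, he, rfl⟩ := Finset.mem_image.1 he'
      obtain ⟨d, hd, rfl⟩ := Finset.mem_image.1 hg'
      have hed : e ≠ d := by
        rintro rfl; exact hne rfl
      have h1 : f x ∈ Sym2.map f (Sym2.map g e) := Sym2.mem_map.2 ⟨x, hxe, rfl⟩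
      have h2 : f x ∈ Sym2.map f (Sym2.map g d) := Sym2.mem_map.2 ⟨x, hxg, rfl⟩
      rw [hfg e he] at h1
      rw [hfg d hd] at h2
      exact hM.2 e he d hd hed (f x) h1 h2
    · rw [Finset.image_image]
      rw [show M.image (Sym2.map f ∘ Sym2.map g) = M.image id from
        Finset.image_congr (fun e he => hfg e he)]
      simp
    · apply le_antisymm (Finset.card_image_le)
      have : M = (M.image (Sym2.map g)).image (Sym2.map f) := by
        rw [Finset.image_image]
        rw [show M.image (Sym2.map f ∘ Sym2.map g) = M.image id from
          Finset.image_congr (fun e he => hfg e he)]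
        simp
      calc M.card = ((M.image (Sym2.map g)).image (Sym2.map f)).card := by rw [← this]
        _ ≤ (M.image (Sym2.map g)).card := Finset.card_image_le
  -- matchNum H = nuA T A
  have hnum : matchNum H = nuA T A := by
    apply le_antisymm
    · obtain ⟨N, hN, hNc⟩ := exists_max_matching H
      obtain ⟨h1, h2, h3⟩ := fwd N hN
      calc matchNum H = (N.image (Sym2.map f)).card := by rw [h3, hNc]
        _ ≤ nuA T A := card_le_nuA h1 h2
    · obtain ⟨M, hM, hMA, hMc⟩ := exists_max_matchingA T A
      obtain ⟨N, hN, hNim, hNc⟩ := bwd M hM hMA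
      calc nuA T A = N.card := by rw [hNc, hMc]
        _ ≤ matchNum H := card_le_matchNum hN
  intro N hN hNc
  obtain ⟨h1, h2, h3⟩ := fwd N hN
  obtain ⟨e', he', hwe'⟩ := hw (N.image (Sym2.map f)) h1 h2 (by rw [h3, hNc, hnum])
  obtain ⟨e, he, rfl⟩ := Finset.mem_image.1 he'
  obtain ⟨a, ha, haw⟩ := Sym2.mem_map.1 hwe'
  exact ⟨e, he, hf haw ▸ ha⟩

end Stmt12Aux

/-- If `v` is mismatched in a tree `T`, then every neighbour `u` of `v` is matched
in `T`, and also matched in the connected component of `T - v` containing `u`. -/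
theorem stmt12 {V : Type*} [Fintype V] [DecidableEq V]
    (T : SimpleGraph V) (hT : T.IsTree) (v : V) (hv : ¬ Matched T v)
    (u : V) (hadj : T.Adj u v) :
    Matched T u ∧
      Matched
        ((T.induce {x | x ≠ v}).induce
          ((T.induce {x | x ≠ v}).connectedComponentMk ⟨u, hadj.ne⟩).supp)
        ⟨⟨u, hadj.ne⟩, rfl⟩ := by
  classical
  set G := T.induce {x | x ≠ v} with hG
  set c := G.connectedComponentMk ⟨u, hadj.ne⟩ with hc
  let f : c.supp → V := fun w => (w.1 : V)
  have hf : Function.Injective f := fun a b h => Subtype.ext (Subtype.ext h)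
  have hAdj : ∀ a b : c.supp, ((G.induce c.supp).Adj a b ↔ T.Adj (f a) (f b)) := by
    intro a b
    constructor
    · intro h; exact h
    · intro h; exact h
  set A : Set V := {x : V | ∃ h : x ≠ v, G.connectedComponentMk ⟨x, h⟩ = c} with hA'
  have hA : ∀ x, x ∈ A ↔ x ∈ Set.range f := by
    intro x
    constructor
    · rintro ⟨h, hm⟩; exact ⟨⟨⟨x, h⟩, hm⟩, rfl⟩
    · rintro ⟨a, rfl⟩; exact ⟨a.1.2, a.2⟩
  have huA : u ∈ A := ⟨hadj.ne, rfl⟩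
  have hvA : v ∉ A := by
    rintro ⟨h, -⟩; exact h rfl
  have hedge : ∀ e ∈ T.edgeSet, v ∉ e → ((∀ x ∈ e, x ∈ A) ∨ (∀ x ∈ e, x ∉ A)) := by
    intro e he hve
    induction e using Sym2.inductionOn with
    | hf a b =>
      rw [Sym2.mem_iff] at hve
      push_neg at hve
      have ha : a ≠ v := fun h => hve.1 h.symm
      have hb : b ≠ v := fun h => hve.2 h.symm
      have hGadj : G.Adj ⟨a, ha⟩ ⟨b, hb⟩ := T.mem_edgeSet.1 he
      have hmk : G.connectedComponentMk ⟨a, ha⟩ = G.connectedComponentMk ⟨b, hb⟩ :=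
        SimpleGraph.ConnectedComponent.connectedComponentMk_eq_of_adj hGadj
      by_cases hmem : a ∈ A
      · left
        intro x hx
        rw [Sym2.mem_iff] at hx
        rcases hx with rfl | rfl
        · exact hmem
        · obtain ⟨ha', hca⟩ := hmem
          exact ⟨hb, by rw [← hmk]; exact hca⟩
      · right
        intro x hx
        rw [Sym2.mem_iff] at hx
        rcases hx with rfl | rfl
        · exact hmem
        · rintro ⟨hb', hcb⟩
          exact hmem ⟨ha, by rw [hmk]; exact hcb⟩
  have hP4 : ∀ w, T.Adj v w → w ∈ A → w = u := by
    intro w hvw hwA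
    by_contra hne
    obtain ⟨hw, hcw⟩ := hwA
    have hreach : G.Reachable ⟨w, hw⟩ ⟨u, hadj.ne⟩ :=
      SimpleGraph.ConnectedComponent.exact (by rw [hcw, hc])
    obtain ⟨p⟩ := hreach
    let φ : G →g T := ⟨Subtype.val, fun h => h⟩
    let q := p.map φ
    have hvq : v ∉ q.support := by
      rw [SimpleGraph.Walk.support_map]
      intro h
      obtain ⟨s, hs, hsv⟩ := List.mem_map.1 h
      exact s.2 hsv
    have hvp : v ∉ (q.toPath : T.Walk w u).support :=
      fun h => hvq (SimpleGraph.Walk.support_toPath_subset q h)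
    let p2 : T.Walk w u :=
      SimpleGraph.Walk.cons hvw.symm (SimpleGraph.Walk.cons hadj.symm SimpleGraph.Walk.nil)
    have hp2 : p2.IsPath := by
      rw [SimpleGraph.Walk.isPath_def]
      simp only [p2, SimpleGraph.Walk.support_cons, SimpleGraph.Walk.support_nil]
      simp [hvw.ne', hne, hadj.ne']
    obtain ⟨p0, hp0, huniq⟩ := hT.existsUnique_path w u
    have h1 := huniq _ (q.toPath).2
    have h2 := huniq _ hp2
    rw [← h2] at h1
    apply hvp
    rw [h1]
    simp [p2]
  have hB := Stmt12Aux.factB T v u hadj A huA hvA hedge hv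
  haveI : Nonempty c.supp := ⟨⟨⟨u, hadj.ne⟩, rfl⟩⟩
  constructor
  · exact Stmt12Aux.part1 T v u hadj A huA hvA hedge hP4 hB
  · exact Stmt12Aux.transfer (G.induce c.supp) T f hf hAdj A hA ⟨⟨u, hadj.ne⟩, rfl⟩ hB
end

section
/- Let G be a weighted graph containing a 6-cycle C₆ attached to the rest of the graph only at a vertex u of C₆: precisely, let C₆(u)⊙ᵏG be obtained from a disjoint weighted 6-cycle C₆ and a weighted graph G of order n by joining u to k vertices of G with positive weights (1 ≤ k ≤ n). Then i₊(C₆(u)⊙ᵏG) = 3 + i₊(G) and i₋(C₆(u)⊙ᵏG) = 3 + i₋(G), independent of all edge weights. -/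
set_option linter.unusedSectionVars false
set_option linter.unnecessarySeqFocus false
open Matrix Finset

section Aux
variable {n : Type*} [Fintype n] [DecidableEq n]


variable {n : Type*} [Fintype n] [DecidableEq n]

/-- Extension-by-zero linear map from functions on a finset. -/
noncomputable def extL (s : Finset n) : (s → ℝ) →ₗ[ℝ] (n → ℝ) where
  toFun x i := if h : i ∈ s then x ⟨i, h⟩ else 0
  map_add' x y := by ext i; by_cases h : i ∈ s <;> simp [h]
  map_smul' r x := by ext i; by_cases h : i ∈ s <;> simp [h]

lemma extL_inj (s : Finset n) : Function.Injective (extL s) := by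
  intro x y h
  funext j
  have := congrFun h j.1
  simpa [extL, j.2] using this

lemma mem_range_extL {s : Finset n} {y : n → ℝ} (hy : y ∈ LinearMap.range (extL s)) :
    ∀ i ∉ s, y i = 0 := by
  obtain ⟨x, rfl⟩ := hy
  intro i hi
  simp [extL, hi]

lemma mem_range_extL_of (s : Finset n) (y : n → ℝ) (hy : ∀ i ∉ s, y i = 0) :
    y ∈ LinearMap.range (extL s) := by
  refine ⟨fun j => y j.1, ?_⟩
  funext i
  by_cases h : i ∈ s
  · simp [extL, h]
  · simp [extL, h, hy i h]

lemma finrank_range_extL (s : Finset n) :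
    Module.finrank ℝ (LinearMap.range (extL s)) = s.card := by
  rw [LinearMap.finrank_range_of_inj (extL_inj s), Module.finrank_fintype_fun_eq_card,
    Fintype.card_coe]

/-- Equiv of `n → ℝ` given by an invertible matrix. -/
noncomputable def mulVecEquiv (Q : Matrix n n ℝ) (hQ : IsUnit Q.det) :
    (n → ℝ) ≃ₗ[ℝ] (n → ℝ) :=
  LinearEquiv.ofLinear Q.mulVecLin Q⁻¹.mulVecLin
    (by rw [← Matrix.mulVecLin_mul, Matrix.mul_nonsing_inv _ hQ, Matrix.mulVecLin_one])
    (by rw [← Matrix.mulVecLin_mul, Matrix.nonsing_inv_mul _ hQ, Matrix.mulVecLin_one])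

lemma qf_congr (Q N : Matrix n n ℝ) (y : n → ℝ) :
    y ⬝ᵥ ((Qᵀ * N * Q) *ᵥ y) = (Q *ᵥ y) ⬝ᵥ (N *ᵥ (Q *ᵥ y)) := by
  rw [← Matrix.mulVec_mulVec, ← Matrix.mulVec_mulVec, Matrix.dotProduct_mulVec,
    Matrix.vecMul_transpose]

lemma count_pos_le (d e : n → ℝ) (Q : Matrix n n ℝ) (hQ : IsUnit Q.det)
    (h : Matrix.diagonal e = Qᵀ * Matrix.diagonal d * Q) :
    (univ.filter fun i => 0 < e i).card ≤ (univ.filter fun i => 0 < d i).card := by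
  by_contra hlt
  push_neg at hlt
  set s : Finset n := univ.filter fun i => 0 < e i with hs
  set t : Finset n := univ.filter fun i => 0 < d i with ht
  set u : Finset n := univ.filter fun i => ¬ 0 < d i with hu
  have hcard : t.card + u.card = Fintype.card n := by
    rw [ht, hu, Finset.card_filter_add_card_filter_not, Finset.card_univ]
  set U₁ : Submodule ℝ (n → ℝ) := LinearMap.range (extL s) with hU₁
  set U₂ : Submodule ℝ (n → ℝ) :=
    Submodule.comap (mulVecEquiv Q hQ : (n → ℝ) →ₗ[ℝ] (n → ℝ)) (LinearMap.range (extL u)) with hU₂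
  have hr1 : Module.finrank ℝ U₁ = s.card := finrank_range_extL s
  have hr2 : Module.finrank ℝ U₂ = u.card := by
    rw [hU₂, Submodule.comap_equiv_eq_map_symm, LinearEquiv.finrank_map_eq, finrank_range_extL]
  have hsup : Module.finrank ℝ (U₁ ⊔ U₂ : Submodule ℝ (n → ℝ)) ≤ Fintype.card n := by
    have := Submodule.finrank_le (U₁ ⊔ U₂ : Submodule ℝ (n → ℝ))
    rwa [Module.finrank_fintype_fun_eq_card] at this
  have hdim : 0 < Module.finrank ℝ (U₁ ⊓ U₂ : Submodule ℝ (n → ℝ)) := by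
    have hkey := Submodule.finrank_sup_add_finrank_inf_eq U₁ U₂
    omega
  obtain ⟨⟨y, hy⟩, hy0⟩ := Module.finrank_pos_iff_exists_ne_zero.mp hdim
  have hyne : y ≠ 0 := fun h0 => hy0 (by simp [h0])
  have hy1 : y ∈ U₁ := hy.1
  have hy2 : (Q *ᵥ y) ∈ LinearMap.range (extL u) := hy.2
  -- positive form value
  have hpos : 0 < y ⬝ᵥ (Matrix.diagonal e *ᵥ y) := by
    have hsum : y ⬝ᵥ (Matrix.diagonal e *ᵥ y) = ∑ i, e i * (y i)^2 := by
      simp [Matrix.mulVec_diagonal, dotProduct]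
      exact Finset.sum_congr rfl fun i _ => by ring
    rw [hsum]
    obtain ⟨i0, hi0⟩ : ∃ i, y i ≠ 0 := by
      by_contra hc; push_neg at hc; exact hyne (funext hc)
    have hi0s : i0 ∈ s := by
      by_contra hns; exact hi0 (mem_range_extL hy1 i0 hns)
    refine Finset.sum_pos' (fun i _ => ?_) ⟨i0, Finset.mem_univ i0, ?_⟩
    · by_cases hi : i ∈ s
      · have : 0 < e i := (Finset.mem_filter.mp hi).2
        positivity
      · simp [mem_range_extL hy1 i hi]
    · have he : 0 < e i0 := (Finset.mem_filter.mp hi0s).2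
      have : 0 < (y i0)^2 := by positivity
      positivity
  -- nonpositive form value
  have hnonpos : (Q *ᵥ y) ⬝ᵥ (Matrix.diagonal d *ᵥ (Q *ᵥ y)) ≤ 0 := by
    set z := Q *ᵥ y with hz
    have hsum : z ⬝ᵥ (Matrix.diagonal d *ᵥ z) = ∑ i, d i * (z i)^2 := by
      simp [Matrix.mulVec_diagonal, dotProduct]
      exact Finset.sum_congr rfl fun i _ => by ring
    rw [hsum]
    refine Finset.sum_nonpos fun i _ => ?_
    by_cases hi : i ∈ u
    · have : ¬ 0 < d i := (Finset.mem_filter.mp hi).2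
      have hd : d i ≤ 0 := le_of_not_gt this
      have : (0:ℝ) ≤ (z i)^2 := sq_nonneg _
      exact mul_nonpos_of_nonpos_of_nonneg hd this
    · simp [mem_range_extL hy2 i hi]
  rw [h, qf_congr] at hpos
  linarith

lemma count_pos_eq (d e : n → ℝ) (Q : Matrix n n ℝ) (hQ : IsUnit Q.det)
    (h : Matrix.diagonal e = Qᵀ * Matrix.diagonal d * Q) :
    (univ.filter fun i => 0 < e i).card = (univ.filter fun i => 0 < d i).card := by
  refine le_antisymm (count_pos_le d e Q hQ h) ?_
  refine count_pos_le e d Q⁻¹ (Matrix.isUnit_nonsing_inv_det Q hQ) ?_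
  rw [h]
  rw [show (Q⁻¹)ᵀ * (Qᵀ * Matrix.diagonal d * Q) * Q⁻¹
      = ((Q * Q⁻¹)ᵀ) * Matrix.diagonal d * (Q * Q⁻¹) by
    simp only [Matrix.transpose_mul, Matrix.mul_assoc], Matrix.mul_nonsing_inv _ hQ]
  simp

lemma count_neg_eq (d e : n → ℝ) (Q : Matrix n n ℝ) (hQ : IsUnit Q.det)
    (h : Matrix.diagonal e = Qᵀ * Matrix.diagonal d * Q) :
    (univ.filter fun i => e i < 0).card = (univ.filter fun i => d i < 0).card := by
  have h' : Matrix.diagonal (-e) = Qᵀ * Matrix.diagonal (-d) * Q := by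
    have e1 : Matrix.diagonal (-e) = -(Matrix.diagonal e) := by
      ext i j; by_cases hij : i = j <;> simp [Matrix.diagonal, hij]
    have e2 : Matrix.diagonal (-d) = -(Matrix.diagonal d) := by
      ext i j; by_cases hij : i = j <;> simp [Matrix.diagonal, hij]
    rw [e1, e2, h, Matrix.mul_neg, Matrix.neg_mul]
  have := count_pos_eq (-d) (-e) Q hQ h'
  simpa [neg_pos] using this



lemma spectral_real (M : Matrix n n ℝ) (hM : M.IsHermitian) :
    M = (hM.eigenvectorUnitary : Matrix n n ℝ) * Matrix.diagonal hM.eigenvalues *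
      (hM.eigenvectorUnitary : Matrix n n ℝ)ᵀ := by
  have h := hM.spectral_theorem
  have h2 : (RCLike.ofReal ∘ hM.eigenvalues : n → ℝ) = hM.eigenvalues := by
    funext i; simp
  rw [h2] at h
  rw [← Matrix.conjTranspose_eq_transpose_of_trivial]
  exact h

lemma unitary_transpose_mul (U : Matrix n n ℝ) (hU : U ∈ Matrix.unitaryGroup n ℝ) :
    U * Uᵀ = 1 := by
  have := (Matrix.mem_unitaryGroup_iff).mp hU
  rwa [Matrix.star_eq_conjTranspose, Matrix.conjTranspose_eq_transpose_of_trivial] at this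

lemma iPos_iNeg_of_diag (M : Matrix n n ℝ) (hM : M.IsHermitian) (P : Matrix n n ℝ)
    (hP : IsUnit P.det) (v : n → ℝ) (h : Matrix.diagonal v = Pᵀ * M * P) :
    iPos M = (univ.filter fun i => 0 < v i).card ∧
      iNeg M = (univ.filter fun i => v i < 0).card := by
  classical
  set U : Matrix n n ℝ := (hM.eigenvectorUnitary : Matrix n n ℝ) with hUdef
  set α := hM.eigenvalues with hα
  have hspec := spectral_real M hM
  have hQ : Matrix.diagonal v = (Uᵀ * P)ᵀ * Matrix.diagonal α * (Uᵀ * P) := by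
    rw [h, hspec]
    simp only [Matrix.transpose_mul, Matrix.transpose_transpose, Matrix.mul_assoc]
    rfl
  have hUU : U * Uᵀ = 1 := unitary_transpose_mul U hM.eigenvectorUnitary.2
  have hdetU : IsUnit (Uᵀ).det := Matrix.isUnit_det_of_right_inverse
    (by rw [mul_eq_one_comm] at hUU; exact hUU)
  have hdet : IsUnit (Uᵀ * P).det := by rw [Matrix.det_mul]; exact hdetU.mul hP
  have hposc := count_pos_eq α v (Uᵀ * P) hdet hQ
  have hnegc := count_neg_eq α v (Uᵀ * P) hdet hQ
  constructor
  · rw [iPos, dif_pos hM, Nat.card_eq_fintype_card, Fintype.card_subtype, ← hposc]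
  · rw [iNeg, dif_pos hM, Nat.card_eq_fintype_card, Fintype.card_subtype, ← hnegc]

end Aux


noncomputable def wP (a : Fin 6 → ℝ) : Matrix (Fin 6) (Fin 6) ℝ := Matrix.of fun i j =>
  if i = j then (1:ℝ)
  else if i = 2 ∧ j = 0 then -(a 0 / a 1)
  else if i = 4 ∧ j = 0 then a 0 * a 2 / (a 1 * a 3)
  else if i = 1 ∧ j = 3 then -(a 2 / a 1)
  else if i = 3 ∧ j = 5 then -(a 4 / a 3)
  else if i = 1 ∧ j = 5 then a 2 * a 4 / (a 1 * a 3)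
  else 0

noncomputable def wPinv (a : Fin 6 → ℝ) : Matrix (Fin 6) (Fin 6) ℝ := Matrix.of fun i j =>
  if i = j then (1:ℝ)
  else if i = 2 ∧ j = 0 then a 0 / a 1
  else if i = 4 ∧ j = 0 then -(a 0 * a 2 / (a 1 * a 3))
  else if i = 1 ∧ j = 3 then a 2 / a 1
  else if i = 3 ∧ j = 5 then a 4 / a 3
  else 0

noncomputable def wA' (a : Fin 6 → ℝ) (t : ℝ) : Matrix (Fin 6) (Fin 6) ℝ := Matrix.of fun i j =>
  if (i = 0 ∧ j = 5) ∨ (i = 5 ∧ j = 0) then t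
  else if (i = 1 ∧ j = 2) ∨ (i = 2 ∧ j = 1) then a 1
  else if (i = 3 ∧ j = 4) ∨ (i = 4 ∧ j = 3) then a 3
  else 0

noncomputable def wR : Matrix (Fin 6) (Fin 6) ℝ := Matrix.of fun i j =>
  if (i = 2 ∧ j = 2) ∨ (i = 4 ∧ j = 4) ∨ (i = 5 ∧ j = 5) then (-1 : ℝ)
  else if i = j ∨ (i = 0 ∧ j = 5) ∨ (i = 5 ∧ j = 0) ∨ (i = 1 ∧ j = 2) ∨ (i = 2 ∧ j = 1)
      ∨ (i = 3 ∧ j = 4) ∨ (i = 4 ∧ j = 3) then 1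
  else 0

noncomputable def wγ (a : Fin 6 → ℝ) (t : ℝ) : Fin 6 → ℝ := fun i =>
  if i = 0 then 2*t else if i = 1 then 2*a 1 else if i = 2 then -(2*a 1)
  else if i = 3 then 2*a 3 else if i = 4 then -(2*a 3) else -(2*t)

set_option maxHeartbeats 2000000 in
lemma wP_mul_wPinv (a : Fin 6 → ℝ) (ha : ∀ i, 0 < a i) : wP a * wPinv a = 1 := by
  have h1 := (ha 1).ne'
  have h3 := (ha 3).ne'
  ext i j
  fin_cases i <;> fin_cases j <;>
    simp (config := { decide := true })
      [wP, wPinv, Matrix.mul_apply, Fin.sum_univ_six, Matrix.one_apply] <;>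
    field_simp <;> ring

set_option maxHeartbeats 4000000 in
lemma wP_congr (a : Fin 6 → ℝ) (ha : ∀ i, 0 < a i) (A : Matrix (Fin 6) (Fin 6) ℝ)
    (hA : ∀ i j, A i j = if j = i + 1 then a i else if i = j + 1 then a j else 0) :
    (wP a)ᵀ * A * wP a = wA' a (a 5 + a 0 * a 2 * a 4 / (a 1 * a 3)) := by
  have h1 := (ha 1).ne'
  have h3 := (ha 3).ne'
  ext i j
  fin_cases i <;> fin_cases j <;>
    simp (config := { decide := true })
      [wP, wA', hA, Matrix.mul_apply, Fin.sum_univ_six, Matrix.transpose_apply] <;>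
    field_simp <;> ring

set_option maxHeartbeats 4000000 in
lemma wR_congr (a : Fin 6 → ℝ) (t : ℝ) :
    wRᵀ * wA' a t * wR = Matrix.diagonal (wγ a t) := by
  ext i j
  fin_cases i <;> fin_cases j <;>
    simp (config := { decide := true })
      [wR, wA', wγ, Matrix.mul_apply, Fin.sum_univ_six, Matrix.transpose_apply,
        Matrix.diagonal_apply] <;>
    ring

set_option maxHeartbeats 2000000 in
lemma wR_inv : wR * ((2:ℝ)⁻¹ • wR) = 1 := by
  ext i j
  fin_cases i <;> fin_cases j <;>
    simp (config := { decide := true })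
      [wR, Matrix.mul_apply, Fin.sum_univ_six, Matrix.one_apply, Matrix.smul_apply] <;>
    norm_num

set_option maxHeartbeats 1000000 in
lemma wA'_symm (a : Fin 6 → ℝ) (t : ℝ) : (wA' a t)ᵀ = wA' a t := by
  ext i j
  fin_cases i <;> fin_cases j <;>
    simp (config := { decide := true }) [wA', Matrix.transpose_apply]


/-- Joining a vertex `u` (index `0`) of a weighted 6-cycle to `k ≥ 1` vertices of a
weighted graph `G` adds exactly `3` to each inertia index, for all edge weights. -/
theorem stmt19 {W : Type*} [Fintype W] [DecidableEq W]
    (G : SimpleGraph W) (wG : W → W → ℝ) (hwG : IsWeighting G wG)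
    (a : Fin 6 → ℝ) (ha : ∀ i, 0 < a i)
    (A : Matrix (Fin 6) (Fin 6) ℝ)
    (hA : ∀ i j, A i j = if j = i + 1 then a i else if i = j + 1 then a j else 0)
    (S : Finset W) (hS : S.Nonempty) (c : W → ℝ) (hc : ∀ b ∈ S, 0 < c b) :
    iPos (Matrix.fromBlocks A
        (Matrix.of fun i b => if i = 0 ∧ b ∈ S then c b else 0)
        (Matrix.of fun b i => if i = 0 ∧ b ∈ S then c b else 0)
        (Matrix.of wG)) = 3 + iPos (Matrix.of wG) ∧
      iNeg (Matrix.fromBlocks A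
        (Matrix.of fun i b => if i = 0 ∧ b ∈ S then c b else 0)
        (Matrix.of fun b i => if i = 0 ∧ b ∈ S then c b else 0)
        (Matrix.of wG)) = 3 + iNeg (Matrix.of wG) := by

  classical
  obtain ⟨hsym, hposadj, hzero⟩ := hwG
  set D : Matrix W W ℝ := Matrix.of wG with hDdef
  have hDher : D.IsHermitian := by
    rw [Matrix.IsHermitian, Matrix.conjTranspose_eq_transpose_of_trivial]
    ext i j
    exact hsym j i
  set t : ℝ := a 5 + a 0 * a 2 * a 4 / (a 1 * a 3) with htdef
  have ht : 0 < t := by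
    have h0 := ha 0; have h1 := ha 1; have h2 := ha 2; have h3 := ha 3
    have h4 := ha 4; have h5 := ha 5
    have : 0 < a 0 * a 2 * a 4 / (a 1 * a 3) := by positivity
    simp only [htdef]; linarith
  have htne : t ≠ 0 := ht.ne'
  set B : Matrix (Fin 6) W ℝ :=
    Matrix.of (fun i b => if i = 0 ∧ b ∈ S then c b else 0) with hBdef
  set Z : Matrix (Fin 6) W ℝ :=
    Matrix.of (fun i b => if i = 5 ∧ b ∈ S then -(c b)/t else 0) with hZdef
  have hBl : (Matrix.of fun b i => if i = 0 ∧ b ∈ S then c b else 0) = Bᵀ := by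
    ext b i; simp [hBdef, Matrix.transpose_apply]
  set M : Matrix (Fin 6 ⊕ W) (Fin 6 ⊕ W) ℝ := Matrix.fromBlocks A B Bᵀ D with hMdef
  -- symmetry of A
  have hAsym : Aᵀ = A := by
    ext i j
    fin_cases i <;> fin_cases j <;>
      simp (config := { decide := true }) [hA, Matrix.transpose_apply]
  have hDt : Dᵀ = D := by ext i j; exact hsym j i
  have hMher : M.IsHermitian := by
    rw [Matrix.IsHermitian, Matrix.conjTranspose_eq_transpose_of_trivial, hMdef,
      Matrix.fromBlocks_transpose, Matrix.transpose_transpose, hAsym, hDt]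
  -- coupling block identities
  have G1 : (wP a)ᵀ * B = B := by
    ext i b
    by_cases hb : b ∈ S <;>
      fin_cases i <;>
        simp (config := { decide := true })
          [wP, hBdef, hb, Matrix.mul_apply, Fin.sum_univ_six, Matrix.transpose_apply]
  have G2 : wA' a t * Z = -B := by
    ext i b
    by_cases hb : b ∈ S <;>
      fin_cases i <;>
        simp (config := { decide := true })
          [wA', hBdef, hZdef, hb, Matrix.mul_apply, Fin.sum_univ_six] <;>
        field_simp <;> ring
  have G3 : Zᵀ * B = 0 := by
    ext b b'
    simp (config := { decide := true })
      [hBdef, hZdef, Matrix.mul_apply, Fin.sum_univ_six, Matrix.transpose_apply]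
  have G1' : Bᵀ * wP a = Bᵀ := by
    have := congrArg Matrix.transpose G1
    rwa [Matrix.transpose_mul, Matrix.transpose_transpose] at this
  have G2' : Zᵀ * wA' a t = -Bᵀ := by
    have := congrArg Matrix.transpose G2
    rwa [Matrix.transpose_mul, wA'_symm, Matrix.transpose_neg] at this
  -- spectral data for D
  set U : Matrix W W ℝ := (hDher.eigenvectorUnitary : Matrix W W ℝ) with hUdef
  set β : W → ℝ := hDher.eigenvalues with hβdef
  have hUU : U * Uᵀ = 1 := unitary_transpose_mul U hDher.eigenvectorUnitary.2
  have f10 : Uᵀ * D * U = Matrix.diagonal β := by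
    have h : star (hDher.eigenvectorUnitary : Matrix W W ℝ) * D *
        (hDher.eigenvectorUnitary : Matrix W W ℝ) =
        Matrix.diagonal (RCLike.ofReal ∘ hDher.eigenvalues) := by
      have hUU' : (hDher.eigenvectorUnitary : Matrix W W ℝ)ᵀ *
          (hDher.eigenvectorUnitary : Matrix W W ℝ) = 1 := mul_eq_one_comm.mp hUU
      have hspec := spectral_real D hDher
      generalize (hDher.eigenvectorUnitary : Matrix W W ℝ) = V at hspec hUU' ⊢
      generalize hDher.eigenvalues = ev at hspec ⊢
      rw [hspec]
      rw [Matrix.star_eq_conjTranspose, Matrix.conjTranspose_eq_transpose_of_trivial]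
      simp only [Matrix.mul_assoc]
      rw [hUU', Matrix.mul_one, ← Matrix.mul_assoc, hUU', Matrix.one_mul]
      rfl
    rw [Matrix.star_eq_conjTranspose, Matrix.conjTranspose_eq_transpose_of_trivial] at h
    have h2 : (RCLike.ofReal ∘ hDher.eigenvalues : W → ℝ) = β := by funext i; simp [hβdef]
    rw [h2] at h
    exact h
  -- the three congruence factors
  set P₁ : Matrix (Fin 6 ⊕ W) (Fin 6 ⊕ W) ℝ := Matrix.fromBlocks (wP a) 0 0 1 with hP₁
  set P₃ : Matrix (Fin 6 ⊕ W) (Fin 6 ⊕ W) ℝ := Matrix.fromBlocks 1 Z 0 1 with hP₃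
  set Q₂ : Matrix (Fin 6 ⊕ W) (Fin 6 ⊕ W) ℝ := Matrix.fromBlocks wR 0 0 U with hQ₂
  set v : Fin 6 ⊕ W → ℝ := Sum.elim (wγ a t) β with hv
  have c1 : P₁ᵀ * M * P₁ = Matrix.fromBlocks (wA' a t) B Bᵀ D := by
    rw [hP₁, hMdef, Matrix.fromBlocks_transpose, Matrix.fromBlocks_multiply,
      Matrix.fromBlocks_multiply]
    simp only [Matrix.transpose_zero, Matrix.transpose_one, Matrix.mul_zero, Matrix.zero_mul,
      Matrix.mul_one, Matrix.one_mul, add_zero, zero_add]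
    rw [Matrix.mul_assoc, ← Matrix.mul_assoc, wP_congr a ha A hA, G1, G1']
  have c2 : P₃ᵀ * (Matrix.fromBlocks (wA' a t) B Bᵀ D) * P₃ = Matrix.fromBlocks (wA' a t) 0 0 D := by
    rw [hP₃, Matrix.fromBlocks_transpose, Matrix.fromBlocks_multiply, Matrix.fromBlocks_multiply]
    simp only [Matrix.transpose_zero, Matrix.transpose_one, Matrix.mul_zero, Matrix.zero_mul,
      Matrix.mul_one, Matrix.one_mul, add_zero, zero_add]
    rw [G2, G2', G3]
    simp
  have c3 : Q₂ᵀ * (Matrix.fromBlocks (wA' a t) 0 0 D) * Q₂ = Matrix.diagonal v := by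
    rw [hQ₂, Matrix.fromBlocks_transpose, Matrix.fromBlocks_multiply, Matrix.fromBlocks_multiply]
    simp only [Matrix.transpose_zero, Matrix.mul_zero, Matrix.zero_mul,
      Matrix.mul_one, Matrix.one_mul, add_zero, zero_add]
    rw [Matrix.mul_assoc, ← Matrix.mul_assoc, wR_congr a t, Matrix.mul_assoc, ← Matrix.mul_assoc,
      f10, hv, ← Matrix.fromBlocks_diagonal]
  set Q : Matrix (Fin 6 ⊕ W) (Fin 6 ⊕ W) ℝ := P₁ * P₃ * Q₂ with hQdef
  have e1 : (P₁ * P₃)ᵀ * M * (P₁ * P₃) = Matrix.fromBlocks (wA' a t) 0 0 D := by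
    have : (P₁ * P₃)ᵀ * M * (P₁ * P₃) = P₃ᵀ * (P₁ᵀ * M * P₁) * P₃ := by
      simp only [Matrix.transpose_mul, Matrix.mul_assoc]
    rw [this, c1, c2]
  have hcong : Matrix.diagonal v = Qᵀ * M * Q := by
    have : Qᵀ * M * Q = Q₂ᵀ * ((P₁ * P₃)ᵀ * M * (P₁ * P₃)) * Q₂ := by
      rw [hQdef]
      simp only [Matrix.transpose_mul, Matrix.mul_assoc]
    rw [this, e1, c3]
  -- determinants
  have hdet1 : IsUnit P₁.det := by
    rw [hP₁, Matrix.det_fromBlocks_zero₂₁]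
    exact (Matrix.isUnit_det_of_right_inverse (wP_mul_wPinv a ha)).mul (by simp)
  have hdet3 : IsUnit P₃.det := by
    rw [hP₃, Matrix.det_fromBlocks_zero₂₁]
    simp
  have hdet2 : IsUnit Q₂.det := by
    rw [hQ₂, Matrix.det_fromBlocks_zero₂₁]
    exact (Matrix.isUnit_det_of_right_inverse wR_inv).mul
      (Matrix.isUnit_det_of_right_inverse hUU)
  have hdetQ : IsUnit Q.det := by
    rw [hQdef, Matrix.det_mul, Matrix.det_mul]
    exact (hdet1.mul hdet3).mul hdet2
  obtain ⟨hMpos, hMneg⟩ := iPos_iNeg_of_diag M hMher Q hdetQ v hcong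
  have hdetU : IsUnit U.det := Matrix.isUnit_det_of_right_inverse hUU
  obtain ⟨hDpos, hDneg⟩ := iPos_iNeg_of_diag D hDher U hdetU β f10.symm
  -- counting
  have hsplitp : ((univ : Finset (Fin 6 ⊕ W)).filter fun i => 0 < v i).card
      = (univ.filter fun i : Fin 6 => 0 < wγ a t i).card
        + (univ.filter fun b : W => 0 < β b).card := by
    rw [hv, Finset.card_filter, Finset.card_filter, Finset.card_filter, Fintype.sum_sum_type]
    simp
    rw [Finset.card_filter, Finset.card_filter]
    congr 1 <;> exact Finset.sum_congr rfl fun _ _ => by split_ifs <;> rfl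
  have hsplitn : ((univ : Finset (Fin 6 ⊕ W)).filter fun i => v i < 0).card
      = (univ.filter fun i : Fin 6 => wγ a t i < 0).card
        + (univ.filter fun b : W => β b < 0).card := by
    rw [hv, Finset.card_filter, Finset.card_filter, Finset.card_filter, Fintype.sum_sum_type]
    simp
    rw [Finset.card_filter, Finset.card_filter]
    congr 1 <;> exact Finset.sum_congr rfl fun _ _ => by split_ifs <;> rfl
  have e1 : (0:ℝ) < 2*t := by linarith
  have e2 : (0:ℝ) < 2*a 1 := by have := ha 1; linarith
  have e3 : (0:ℝ) < 2*a 3 := by have := ha 3; linarith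
  have f1 : ¬ ((0:ℝ) < -(2*t)) := by linarith
  have f2 : ¬ ((0:ℝ) < -(2*a 1)) := by linarith
  have f3 : ¬ ((0:ℝ) < -(2*a 3)) := by linarith
  have g1 : ¬ ((2*t) < (0:ℝ)) := by linarith
  have g2 : ¬ ((2*a 1) < (0:ℝ)) := by linarith
  have g3 : ¬ ((2*a 3) < (0:ℝ)) := by linarith
  have k1 : (-(2*t)) < (0:ℝ) := by linarith
  have k2 : (-(2*a 1)) < (0:ℝ) := by linarith
  have k3 : (-(2*a 3)) < (0:ℝ) := by linarith
  have hγp : (univ.filter fun i : Fin 6 => 0 < wγ a t i).card = 3 := by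
    rw [Finset.card_filter, Fin.sum_univ_six]
    simp (config := { decide := true }) [wγ, e1, e2, e3, f1, f2, f3]
  have hγn : (univ.filter fun i : Fin 6 => wγ a t i < 0).card = 3 := by
    rw [Finset.card_filter, Fin.sum_univ_six]
    simp (config := { decide := true }) [wγ, g1, g2, g3, k1, k2, k3]
  constructor
  · rw [hBl, ← hMdef, hMpos, hsplitp, hγp, hDpos]
  · rw [hBl, ← hMdef, hMneg, hsplitn, hγn, hDneg]
end
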